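/- arXiv:0807.1387 — 7 statements merged into one kernel-verified Lean document; each statement's English description precedes it below -/
import Mathlib

section
/- Let β₀ ∈ ℝ, set θ := β₀/2 + π/4, V := (cos θ, sin θ) ∈ ℝ² and jV := (−sin θ, cos θ). Let u : ℝ² → ℝ be of class C². Then u satisfies the constant-Lagrangian-angle equation cos β₀ · (∂²u/∂t² − ∂²u/∂s²) − 2 sin β₀ · ∂²u/∂s∂t = 0 at every point (s,t) ∈ ℝ² if and only if there exist C² functions f₁, f₂ : ℝ → ℝ such that u(p) = f₁(⟨p, V⟩) + f₂(⟨p, jV⟩) for all p ∈ ℝ². -/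
noncomputable section

open Real

/-- Partial derivative of `f : ℝ² → E` in the first coordinate direction (the `s`-direction). -/
def pd1 {E : Type*} [NormedAddCommGroup E] [NormedSpace ℝ E]
    (f : ℝ × ℝ → E) (p : ℝ × ℝ) : E := fderiv ℝ f p (1, 0)

/-- Partial derivative of `f : ℝ² → E` in the second coordinate direction (the `t`-direction). -/
def pd2 {E : Type*} [NormedAddCommGroup E] [NormedSpace ℝ E]
    (f : ℝ × ℝ → E) (p : ℝ × ℝ) : E := fderiv ℝ f p (0, 1)

/-- Euclidean inner product on ℝ². -/
def dot2 (v w : ℝ × ℝ) : ℝ := v.1 * w.1 + v.2 * w.2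

-- auxiliary: fderiv of (fun q => fderiv f q w)
lemma fderiv_apply_const (f : ℝ × ℝ → ℝ) (hf : ContDiff ℝ 2 f) (p v w : ℝ × ℝ) :
    fderiv ℝ (fun q => fderiv ℝ f q w) p v = (fderiv ℝ (fderiv ℝ f) p v) w := by
  have hf' : ContDiff ℝ 1 (fderiv ℝ f) := hf.fderiv_right (by norm_num)
  have h1 : DifferentiableAt ℝ (fderiv ℝ f) p := (hf'.differentiable one_ne_zero) p
  rw [fderiv_clm_apply h1 (differentiableAt_const w)]
  simp

lemma D2_symm (f : ℝ × ℝ → ℝ) (hf : ContDiff ℝ 2 f) (p v w : ℝ × ℝ) :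
    (fderiv ℝ (fderiv ℝ f) p v) w = (fderiv ℝ (fderiv ℝ f) p w) v := by
  have hf' : ContDiff ℝ 1 (fderiv ℝ f) := hf.fderiv_right (by norm_num)
  exact second_derivative_symmetric
    (fun y => ((hf.differentiable two_ne_zero) y).hasFDerivAt)
    (((hf'.differentiable one_ne_zero) p).hasFDerivAt) v w

lemma fderiv_comp_clm (f : ℝ × ℝ → ℝ) (hf : Differentiable ℝ f)
    (R : ℝ × ℝ →L[ℝ] ℝ × ℝ) (p v : ℝ × ℝ) :
    fderiv ℝ (fun q => f (R q)) p v = fderiv ℝ f (R p) (R v) := by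
  have h : fderiv ℝ (f ∘ R) p = (fderiv ℝ f (R p)).comp (fderiv ℝ R p) :=
    fderiv_comp p (hf (R p)) R.differentiableAt
  rw [R.fderiv] at h
  have : fderiv ℝ (fun q => f (R q)) p = fderiv ℝ (f ∘ R) p := rfl
  rw [this, h]; rfl

lemma D2_comp_clm (f : ℝ × ℝ → ℝ) (hf : ContDiff ℝ 2 f)
    (R : ℝ × ℝ →L[ℝ] ℝ × ℝ) (p v w : ℝ × ℝ) :
    fderiv ℝ (fderiv ℝ (fun q => f (R q))) p v w
      = fderiv ℝ (fderiv ℝ f) (R p) (R v) (R w) := by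
  have hfR : ContDiff ℝ 2 (fun q => f (R q)) := hf.comp R.contDiff
  have hf' : ContDiff ℝ 1 (fderiv ℝ f) := hf.fderiv_right (by norm_num)
  have hg : Differentiable ℝ (fun q => fderiv ℝ f q (R w)) :=
    (hf'.differentiable one_ne_zero).clm_apply (differentiable_const _)
  rw [← fderiv_apply_const _ hfR p v w]
  have he : (fun q => fderiv ℝ (fun q' => f (R q')) q w)
      = fun q => (fun q' => fderiv ℝ f q' (R w)) (R q) := by
    funext q; exact fderiv_comp_clm f (hf.differentiable two_ne_zero) R q w
  calc fderiv ℝ (fun q => fderiv ℝ (fun q' => f (R q')) q w) p v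
      = fderiv ℝ (fun q => (fun q' => fderiv ℝ f q' (R w)) (R q)) p v := by rw [he]
    _ = fderiv ℝ (fun q' => fderiv ℝ f q' (R w)) (R p) (R v) :=
        fderiv_comp_clm _ hg R p v
    _ = fderiv ℝ (fderiv ℝ f) (R p) (R v) (R w) := fderiv_apply_const f hf (R p) (R v) (R w)

lemma split_of_mixed_zero (w : ℝ × ℝ → ℝ) (hw : ContDiff ℝ 2 w)
    (h : ∀ q, fderiv ℝ (fun q' => fderiv ℝ w q' (0, 1)) q (1, 0) = 0) :
    ∀ a b, w (a, b) = w (a, 0) + (w (0, b) - w (0, 0)) := by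
  have hw' : ContDiff ℝ 1 (fderiv ℝ w) := hw.fderiv_right (by norm_num)
  have hwd : Differentiable ℝ w := hw.differentiable two_ne_zero
  have hg : Differentiable ℝ (fun q => fderiv ℝ w q (0, 1)) :=
    (hw'.differentiable one_ne_zero).clm_apply (differentiable_const _)
  have hgconst : ∀ b a : ℝ, fderiv ℝ w (a, b) (0, 1) = fderiv ℝ w (0, b) (0, 1) := by
    intro b
    have hd : ∀ a : ℝ, HasDerivAt (fun a : ℝ => fderiv ℝ w (a, b) (0, 1)) 0 a := by
      intro a
      have hline : HasDerivAt (fun a : ℝ => ((a, b) : ℝ × ℝ)) (1, 0) a :=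
        (hasDerivAt_id a).prodMk (hasDerivAt_const a b)
      have h2 := (hg (a, b)).hasFDerivAt.comp_hasDerivAt a hline
      simpa [h (a, b), Function.comp_def] using h2
    intro a
    exact is_const_of_deriv_eq_zero (fun x => (hd x).differentiableAt)
      (fun x => (hd x).deriv) a 0
  intro a b
  have hW : ∀ x y : ℝ, HasDerivAt (fun t : ℝ => w (x, t)) (fderiv ℝ w (x, y) (0, 1)) y := by
    intro x y
    have hline : HasDerivAt (fun t : ℝ => ((x, t) : ℝ × ℝ)) (0, 1) y :=
      (hasDerivAt_const y x).prodMk (hasDerivAt_id y)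
    exact (hwd (x, y)).hasFDerivAt.comp_hasDerivAt y hline
  have hk : ∀ t : ℝ, HasDerivAt (fun t : ℝ => w (a, t) - w (0, t)) 0 t := by
    intro t
    have h2 := (hW a t).fun_sub (hW 0 t)
    rw [hgconst t a] at h2
    simpa using h2
  have hc := is_const_of_deriv_eq_zero (fun t => (hk t).differentiableAt)
    (fun t => (hk t).deriv) b 0
  linarith

def rotCLM (c s : ℝ) : ℝ × ℝ →L[ℝ] ℝ × ℝ :=
  (c • ContinuousLinearMap.fst ℝ ℝ ℝ - s • ContinuousLinearMap.snd ℝ ℝ ℝ).prod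
    (s • ContinuousLinearMap.fst ℝ ℝ ℝ + c • ContinuousLinearMap.snd ℝ ℝ ℝ)

lemma rotCLM_apply (c s a b : ℝ) : rotCLM c s (a, b) = (c * a - s * b, s * a + c * b) := by
  simp [rotCLM]

example (f₂ : ℝ → ℝ) (hf₂ : ContDiff ℝ 2 f₂) : ContDiff ℝ 1 (deriv f₂) := by
  have : (2 : WithTop ℕ∞) = 1 + 1 := by norm_num
  exact ((contDiff_succ_iff_deriv (n := 1)).mp (this ▸ hf₂)).2.2

lemma key_identity (u : ℝ × ℝ → ℝ) (hu : ContDiff ℝ 2 u) (β₀ c s : ℝ)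
    (hsc : 2 * (s * c) = Real.cos β₀) (hc2 : c ^ 2 - s ^ 2 = -Real.sin β₀) (p : ℝ × ℝ) :
    Real.cos β₀ * (pd2 (pd2 u) p - pd1 (pd1 u) p) - 2 * Real.sin β₀ * pd2 (pd1 u) p
      = 2 * fderiv ℝ (fderiv ℝ u) p (c, s) (-s, c) := by
  have e1 : pd1 u = fun q => fderiv ℝ u q (1, 0) := rfl
  have e2 : pd2 u = fun q => fderiv ℝ u q (0, 1) := rfl
  have h11 := fderiv_apply_const u hu p (1, 0) (1, 0)
  have h22 := fderiv_apply_const u hu p (0, 1) (0, 1)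
  have h21 := fderiv_apply_const u hu p (0, 1) (1, 0)
  have hsymm := D2_symm u hu p (0, 1) (1, 0)
  have hV : ((c, s) : ℝ × ℝ) = c • ((1, 0) : ℝ × ℝ) + s • ((0, 1) : ℝ × ℝ) := by
    simp
  have hJ : ((-s, c) : ℝ × ℝ) = (-s) • ((1, 0) : ℝ × ℝ) + c • ((0, 1) : ℝ × ℝ) := by
    simp
  simp only [pd1, pd2, e1, e2, h11, h22, h21]
  rw [hV, hJ]
  simp only [map_add, map_smul, ContinuousLinearMap.add_apply,
    ContinuousLinearMap.smul_apply, smul_eq_mul]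
  set F11 := fderiv ℝ (fderiv ℝ u) p (1, 0) (1, 0) with hF11
  set F12 := fderiv ℝ (fderiv ℝ u) p (1, 0) (0, 1) with hF12
  set F21 := fderiv ℝ (fderiv ℝ u) p (0, 1) (1, 0) with hF21
  set F22 := fderiv ℝ (fderiv ℝ u) p (0, 1) (0, 1) with hF22
  rw [show F21 = F12 from hsymm]
  linear_combination (F11 - F22) * hsc + (-2 * F12) * hc2

lemma D2_split_zero (f₁ f₂ : ℝ → ℝ) (hf₁ : ContDiff ℝ 2 f₁) (hf₂ : ContDiff ℝ 2 f₂)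
    (q : ℝ × ℝ) :
    fderiv ℝ (fderiv ℝ (fun q : ℝ × ℝ => f₁ q.1 + f₂ q.2)) q (1, 0) (0, 1) = 0 := by
  have hWc : ContDiff ℝ 2 (fun q : ℝ × ℝ => f₁ q.1 + f₂ q.2) :=
    (hf₁.comp contDiff_fst).add (hf₂.comp contDiff_snd)
  rw [← fderiv_apply_const _ hWc q (1, 0) (0, 1)]
  have hd1 : Differentiable ℝ f₁ := hf₁.differentiable two_ne_zero
  have hd2 : Differentiable ℝ f₂ := hf₂.differentiable two_ne_zero
  have hfd : ∀ q' : ℝ × ℝ,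
      fderiv ℝ (fun q : ℝ × ℝ => f₁ q.1 + f₂ q.2) q' (0, 1) = deriv f₂ q'.2 := by
    intro q'
    have h1 : HasFDerivAt (fun q : ℝ × ℝ => f₁ q.1)
        (deriv f₁ q'.1 • ContinuousLinearMap.fst ℝ ℝ ℝ) q' :=
      (hd1 q'.1).hasDerivAt.comp_hasFDerivAt q' hasFDerivAt_fst
    have h2 : HasFDerivAt (fun q : ℝ × ℝ => f₂ q.2)
        (deriv f₂ q'.2 • ContinuousLinearMap.snd ℝ ℝ ℝ) q' :=
      (hd2 q'.2).hasDerivAt.comp_hasFDerivAt q' hasFDerivAt_snd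
    rw [(h1.fun_add h2).fderiv]
    simp
  have hcongr : (fun q' => fderiv ℝ (fun q : ℝ × ℝ => f₁ q.1 + f₂ q.2) q' (0, 1))
      = fun q' : ℝ × ℝ => deriv f₂ q'.2 := funext hfd
  rw [hcongr]
  have hdf₂ : ContDiff ℝ 1 (deriv f₂) := by
    have h2 : (2 : WithTop ℕ∞) = 1 + 1 := by norm_num
    exact ((contDiff_succ_iff_deriv (n := 1)).mp (h2 ▸ hf₂)).2.2
  have h3 : HasFDerivAt (fun q' : ℝ × ℝ => deriv f₂ q'.2)
      (deriv (deriv f₂) q.2 • ContinuousLinearMap.snd ℝ ℝ ℝ) q :=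
    ((hdf₂.differentiable one_ne_zero) q.2).hasDerivAt.comp_hasFDerivAt q hasFDerivAt_snd
  rw [h3.fderiv]
  simp

/-- A C² function `u` on ℝ² satisfies the constant-Lagrangian-angle equation
`cos β₀ (u_tt − u_ss) − 2 sin β₀ u_st = 0` everywhere if and only if, with
`θ := β₀/2 + π/4`, `V := (cos θ, sin θ)` and `jV := (−sin θ, cos θ)`, there are C²
functions `f₁ f₂ : ℝ → ℝ` such that `u p = f₁ ⟨p, V⟩ + f₂ ⟨p, jV⟩` for all `p`. -/
theorem constant_lagrangian_angle_classification (β₀ : ℝ) (u : ℝ × ℝ → ℝ)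
    (hu : ContDiff ℝ 2 u) :
    (∀ p : ℝ × ℝ,
        Real.cos β₀ * (pd2 (pd2 u) p - pd1 (pd1 u) p)
          - 2 * Real.sin β₀ * pd2 (pd1 u) p = 0)
      ↔ ∃ f₁ f₂ : ℝ → ℝ, ContDiff ℝ 2 f₁ ∧ ContDiff ℝ 2 f₂ ∧
          ∀ p : ℝ × ℝ,
            u p = f₁ (dot2 p (Real.cos (β₀ / 2 + π / 4), Real.sin (β₀ / 2 + π / 4)))
                + f₂ (dot2 p (-Real.sin (β₀ / 2 + π / 4), Real.cos (β₀ / 2 + π / 4))) := by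
  set θ := β₀ / 2 + π / 4 with hθ
  set c := Real.cos θ with hc
  set s := Real.sin θ with hs
  have hcs : c ^ 2 + s ^ 2 = 1 := by rw [hc, hs]; exact Real.cos_sq_add_sin_sq θ
  have h2θ : 2 * θ = β₀ + π / 2 := by rw [hθ]; ring
  have hsc : 2 * (s * c) = Real.cos β₀ := by
    have h := Real.sin_two_mul θ
    rw [h2θ, Real.sin_add_pi_div_two] at h
    rw [hs, hc]; linarith
  have hc2 : c ^ 2 - s ^ 2 = -Real.sin β₀ := by
    have h := Real.cos_two_mul' (x := θ)
    rw [h2θ, Real.cos_add_pi_div_two] at h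
    rw [hc, hs]; linarith
  set R := rotCLM c s with hR
  have hR10 : R (1, 0) = (c, s) := by rw [hR, rotCLM_apply]; norm_num
  have hR01 : R (0, 1) = (-s, c) := by rw [hR, rotCLM_apply]; norm_num
  have hRinv : ∀ p : ℝ × ℝ, R (dot2 p (c, s), dot2 p (-s, c)) = p := by
    rintro ⟨p1, p2⟩
    rw [hR]
    simp only [dot2, rotCLM_apply]
    rw [Prod.mk.injEq]
    constructor
    · linear_combination p1 * hcs
    · linear_combination p2 * hcs
  constructor
  · intro hPDE
    have hw : ContDiff ℝ 2 (fun q => u (R q)) := hu.comp R.contDiff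
    have hmix : ∀ q, fderiv ℝ (fun q' => fderiv ℝ (fun q'' => u (R q'')) q' (0, 1)) q (1, 0) = 0 := by
      intro q
      rw [fderiv_apply_const _ hw q (1, 0) (0, 1)]
      rw [D2_comp_clm u hu R q (1, 0) (0, 1), hR10, hR01]
      have hk := key_identity u hu β₀ c s hsc hc2 (R q)
      have hp := hPDE (R q)
      linarith
    have hsplit := split_of_mixed_zero _ hw hmix
    refine ⟨fun a => u (R (a, 0)), fun b => u (R (0, b)) - u (R (0, 0)), ?_, ?_, ?_⟩
    · exact hw.comp (contDiff_id.prodMk contDiff_const)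
    · exact (hw.comp (contDiff_const.prodMk contDiff_id)).sub contDiff_const
    · intro p
      have h1 : u p = u (R (dot2 p (c, s), dot2 p (-s, c))) := by rw [hRinv p]
      rw [h1, hsplit]
  · rintro ⟨f₁, f₂, hf₁, hf₂, hrep⟩
    intro p
    rw [key_identity u hu β₀ c s hsc hc2 p]
    suffices h : fderiv ℝ (fderiv ℝ u) p (c, s) (-s, c) = 0 by rw [h]; ring
    have hcomp := D2_comp_clm u hu R (dot2 p (c, s), dot2 p (-s, c)) (1, 0) (0, 1)
    rw [hRinv p, hR10, hR01] at hcomp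
    rw [← hcomp]
    have hWeq : (fun q => u (R q)) = fun q : ℝ × ℝ => f₁ q.1 + f₂ q.2 := by
      funext q
      obtain ⟨a, b⟩ := q
      have ha : dot2 (R (a, b)) (c, s) = a := by
        rw [hR]; simp only [dot2, rotCLM_apply]; linear_combination a * hcs
      have hb : dot2 (R (a, b)) (-s, c) = b := by
        rw [hR]; simp only [dot2, rotCLM_apply]; linear_combination b * hcs
      rw [hrep (R (a, b)), ha, hb]
    rw [hWeq]
    exact D2_split_zero f₁ f₂ hf₁ hf₂ _
end
end

section
/- Let γ : I → ℝ² be a C³ unit-speed curve with curvature k(s) := ⟨γ″(s), jγ′(s)⟩, let a : I → ℝ be C¹, and consider the affine normal bundle X : I × ℝ → ℝ⁴, X(s,t) = (γ(s), a(s)γ′(s) + t jγ′(s)). Then the coefficients of the metric induced by 𝔾 are E := 𝔾(∂_s X, ∂_s X) = −2 a(s) k(s), F := 𝔾(∂_s X, ∂_t X) = −1, G := 𝔾(∂_t X, ∂_t X) = 0 at every point; in particular EG − F² = −1, so the induced metric is everywhere nondegenerate of Lorentzian signature. -/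
noncomputable section

open Real

/-- Rotation by `π/2`: `j(v₁,v₂) = (−v₂,v₁)`. -/
def rot2 (v : ℝ × ℝ) : ℝ × ℝ := (-v.2, v.1)

/-- The canonical symplectic form on `Tℝ² ≅ ℝ⁴ = ℝ² × ℝ²`. -/
def Om (ξ η : (ℝ × ℝ) × (ℝ × ℝ)) : ℝ := dot2 ξ.2 η.1 - dot2 ξ.1 η.2

/-- The complex structure `𝕁 = j ⊕ j` on `ℝ⁴ = ℝ² × ℝ²`. -/
def Jc (ξ : (ℝ × ℝ) × (ℝ × ℝ)) : (ℝ × ℝ) × (ℝ × ℝ) := (rot2 ξ.1, rot2 ξ.2)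

/-- The neutral pseudo-metric `𝔾(ξ,η) = Ω(𝕁ξ, η)` on `ℝ⁴`. -/
def Gm (ξ η : (ℝ × ℝ) × (ℝ × ℝ)) : ℝ := Om (Jc ξ) η

/-- For the affine normal bundle `X(s,t) = (γ(s), a(s)γ′(s) + t jγ′(s))` over a C³ unit-speed
curve `γ` with curvature `k(s) = ⟨γ″(s), jγ′(s)⟩`, the induced metric coefficients are
`E = −2 a k`, `F = −1`, `G = 0`, so `EG − F² = −1` (nondegenerate of Lorentzian signature). -/
theorem affine_normal_bundle_metric (I : Set ℝ) (hI : IsOpen I) (hI' : I.OrdConnected)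
    (γ : ℝ → ℝ × ℝ) (hγ : ContDiffOn ℝ 3 γ I)
    (hunit : ∀ s ∈ I, dot2 (deriv γ s) (deriv γ s) = 1)
    (a : ℝ → ℝ) (ha : ContDiffOn ℝ 1 a I)
    (k : ℝ → ℝ) (hk : ∀ s ∈ I, k s = dot2 (deriv (deriv γ) s) (rot2 (deriv γ s)))
    (X : ℝ × ℝ → (ℝ × ℝ) × (ℝ × ℝ))
    (hX : ∀ s t : ℝ, X (s, t) = (γ s, a s • deriv γ s + t • rot2 (deriv γ s))) :
    ∀ s ∈ I, ∀ t : ℝ,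
      Gm (pd1 X (s, t)) (pd1 X (s, t)) = -2 * a s * k s ∧
      Gm (pd1 X (s, t)) (pd2 X (s, t)) = -1 ∧
      Gm (pd2 X (s, t)) (pd2 X (s, t)) = 0 ∧
      Gm (pd1 X (s, t)) (pd1 X (s, t)) * Gm (pd2 X (s, t)) (pd2 X (s, t))
        - (Gm (pd1 X (s, t)) (pd2 X (s, t))) ^ 2 = -1 := by
  intro s hs t
  have hmem : I ∈ nhds s := hI.mem_nhds hs
  have hγ1 : ContDiffOn ℝ 2 (deriv γ) I := hγ.deriv_of_isOpen hI (by norm_num)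
  have hgs : HasDerivAt γ (deriv γ s) s :=
    ((hγ.differentiableOn (by norm_num)).differentiableAt hmem).hasDerivAt
  have hg's : HasDerivAt (deriv γ) (deriv (deriv γ) s) s :=
    ((hγ1.differentiableOn (by norm_num)).differentiableAt hmem).hasDerivAt
  have has : HasDerivAt a (deriv a s) s :=
    ((ha.differentiableOn (by norm_num)).differentiableAt hmem).hasDerivAt
  -- rotation as a continuous linear map
  set R : (ℝ × ℝ) →L[ℝ] (ℝ × ℝ) :=
    (-(ContinuousLinearMap.snd ℝ ℝ ℝ)).prod (ContinuousLinearMap.fst ℝ ℝ ℝ) with hRdef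
  have hR : ∀ v, R v = rot2 v := fun v => rfl
  -- components of deriv γ as functions
  have hg1 : HasDerivAt (fun u => (deriv γ u).1) ((deriv (deriv γ) s).1) s := by
    simpa [Function.comp_def] using
      (ContinuousLinearMap.fst ℝ ℝ ℝ).hasFDerivAt.comp_hasDerivAt s hg's
  have hg2 : HasDerivAt (fun u => (deriv γ u).2) ((deriv (deriv γ) s).2) s := by
    simpa [Function.comp_def] using
      (ContinuousLinearMap.snd ℝ ℝ ℝ).hasFDerivAt.comp_hasDerivAt s hg's
  -- orthogonality: ⟨γ'', γ'⟩ = 0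
  have horth : (deriv (deriv γ) s).1 * (deriv γ s).1 + (deriv (deriv γ) s).2 * (deriv γ s).2 = 0 := by
    have hdot : HasDerivAt (fun u => dot2 (deriv γ u) (deriv γ u))
        (((deriv (deriv γ) s).1 * (deriv γ s).1 + (deriv γ s).1 * (deriv (deriv γ) s).1)
          + ((deriv (deriv γ) s).2 * (deriv γ s).2 + (deriv γ s).2 * (deriv (deriv γ) s).2)) s := by
      simpa [dot2, Pi.mul_def, Pi.add_def] using (hg1.mul hg1).add (hg2.mul hg2)
    have heq : (fun u => dot2 (deriv γ u) (deriv γ u)) =ᶠ[nhds s] fun _ => (1:ℝ) :=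
      Filter.eventually_of_mem hmem fun u hu => hunit u hu
    have h0 : HasDerivAt (fun u => dot2 (deriv γ u) (deriv γ u)) 0 s :=
      (hasDerivAt_const s (1:ℝ)).congr_of_eventuallyEq heq
    have := hdot.unique h0
    linarith [this]
  -- the total derivative of X
  have hXfun : X = fun p : ℝ × ℝ => (γ p.1, a p.1 • deriv γ p.1 + p.2 • rot2 (deriv γ p.1)) := by
    funext p; cases p with
    | mk u v => exact hX u v
  have hRg : HasDerivAt (fun u => rot2 (deriv γ u)) (rot2 (deriv (deriv γ) s)) s := by
    simpa [Function.comp_def, hR] using R.hasFDerivAt.comp_hasDerivAt s hg's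
  have hF1 : HasFDerivAt (fun p : ℝ × ℝ => γ p.1)
      ((ContinuousLinearMap.smulRight (1 : ℝ →L[ℝ] ℝ) (deriv γ s)).comp
        (ContinuousLinearMap.fst ℝ ℝ ℝ)) (s, t) :=
    HasFDerivAt.comp (s, t) hgs.hasFDerivAt hasFDerivAt_fst
  have hA : HasFDerivAt (fun p : ℝ × ℝ => a p.1 • deriv γ p.1)
      ((ContinuousLinearMap.smulRight (1 : ℝ →L[ℝ] ℝ)
          (a s • deriv (deriv γ) s + deriv a s • deriv γ s)).comp
        (ContinuousLinearMap.fst ℝ ℝ ℝ)) (s, t) :=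
    by have := HasFDerivAt.comp (s, t) (has.smul hg's).hasFDerivAt (hasFDerivAt_fst (𝕜 := ℝ) (E := ℝ) (F := ℝ) (p := (s, t))); exact this
  have hRgF : HasFDerivAt (fun p : ℝ × ℝ => rot2 (deriv γ p.1))
      ((ContinuousLinearMap.smulRight (1 : ℝ →L[ℝ] ℝ) (rot2 (deriv (deriv γ) s))).comp
        (ContinuousLinearMap.fst ℝ ℝ ℝ)) (s, t) :=
    by have := HasFDerivAt.comp (s, t) hRg.hasFDerivAt (hasFDerivAt_fst (𝕜 := ℝ) (E := ℝ) (F := ℝ) (p := (s, t))); exact this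
  have hB : HasFDerivAt (fun p : ℝ × ℝ => p.2 • rot2 (deriv γ p.1))
      (t • ((ContinuousLinearMap.smulRight (1 : ℝ →L[ℝ] ℝ) (rot2 (deriv (deriv γ) s))).comp
          (ContinuousLinearMap.fst ℝ ℝ ℝ))
        + (ContinuousLinearMap.snd ℝ ℝ ℝ).smulRight (rot2 (deriv γ s))) (s, t) :=
    hasFDerivAt_snd.smul hRgF
  have hXd : HasFDerivAt X
      (((ContinuousLinearMap.smulRight (1 : ℝ →L[ℝ] ℝ) (deriv γ s)).comp
          (ContinuousLinearMap.fst ℝ ℝ ℝ)).prod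
        (((ContinuousLinearMap.smulRight (1 : ℝ →L[ℝ] ℝ)
              (a s • deriv (deriv γ) s + deriv a s • deriv γ s)).comp
            (ContinuousLinearMap.fst ℝ ℝ ℝ))
          + (t • ((ContinuousLinearMap.smulRight (1 : ℝ →L[ℝ] ℝ) (rot2 (deriv (deriv γ) s))).comp
              (ContinuousLinearMap.fst ℝ ℝ ℝ))
            + (ContinuousLinearMap.snd ℝ ℝ ℝ).smulRight (rot2 (deriv γ s))))) (s, t) := by
    rw [hXfun]; exact hF1.prodMk (hA.add hB)
  have hp1 : pd1 X (s, t)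
      = (deriv γ s, (a s • deriv (deriv γ) s + deriv a s • deriv γ s)
          + t • rot2 (deriv (deriv γ) s)) := by
    rw [pd1, hXd.fderiv]
    simp
  have hp2 : pd2 X (s, t) = ((0, 0), rot2 (deriv γ s)) := by
    rw [pd2, hXd.fderiv]
    simp; rfl
  rw [hp1, hp2, hk s hs]
  have hu := hunit s hs
  simp only [dot2, rot2, Gm, Om, Jc, Prod.fst, Prod.snd, Prod.smul_mk, smul_eq_mul,
    Prod.mk_add_mk, Prod.smul_fst, Prod.smul_snd, Prod.fst_add, Prod.snd_add] at *
  refine ⟨?_, ?_, by ring, ?_⟩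
  · linear_combination (-2*t) * horth
  · linear_combination -hu
  · linear_combination (-((deriv γ s).1 * (deriv γ s).1 + (deriv γ s).2 * (deriv γ s).2 + 1)) * hu
end
end

section
/- Let U ⊆ ℝ² be open and u : U → ℝ of class C², and consider the gradient graph X : U → ℝ⁴, X(s,t) = ((s,t), ∇u(s,t)). Then the coefficients of the metric induced by 𝔾 are E := 𝔾(∂_s X, ∂_s X) = −2 u_{st}, F := 𝔾(∂_s X, ∂_t X) = u_{ss} − u_{tt}, G := 𝔾(∂_t X, ∂_t X) = 2 u_{st}, so that EG − F² = −(4 u_{st}² + (u_{ss} − u_{tt})²); in particular, the induced metric is degenerate at a point exactly when u_{st} = 0 and u_{ss} = u_{tt} there. -/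
noncomputable section

open Real

theorem aux_iff (a b d : ℝ) : -(4 * b ^ 2 + (a - d) ^ 2) = 0 ↔ b = 0 ∧ a = d := by
  constructor
  · intro h
    constructor
    · nlinarith [sq_nonneg b, sq_nonneg (a - d)]
    · nlinarith [sq_nonneg b, sq_nonneg (a - d)]
  · rintro ⟨h1, h2⟩
    rw [h1, h2]; ring

/-- For the gradient graph `X(s,t) = ((s,t), ∇u(s,t))` of a C² function `u` on an open
`U ⊆ ℝ²`, the induced metric coefficients are `E = −2u_st`, `F = u_ss − u_tt`, `G = 2u_st`,
so `EG − F² = −(4u_st² + (u_ss − u_tt)²)`; the metric is degenerate at a point exactly when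
`u_st = 0` and `u_ss = u_tt` there. -/
theorem gradient_graph_metric (U : Set (ℝ × ℝ)) (hU : IsOpen U)
    (u : ℝ × ℝ → ℝ) (hu : ContDiffOn ℝ 2 u U) :
    ∀ p ∈ U,
      Gm (pd1 (fun q => (q, (pd1 u q, pd2 u q))) p) (pd1 (fun q => (q, (pd1 u q, pd2 u q))) p)
          = -2 * pd2 (pd1 u) p ∧
      Gm (pd1 (fun q => (q, (pd1 u q, pd2 u q))) p) (pd2 (fun q => (q, (pd1 u q, pd2 u q))) p)
          = pd1 (pd1 u) p - pd2 (pd2 u) p ∧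
      Gm (pd2 (fun q => (q, (pd1 u q, pd2 u q))) p) (pd2 (fun q => (q, (pd1 u q, pd2 u q))) p)
          = 2 * pd2 (pd1 u) p ∧
      Gm (pd1 (fun q => (q, (pd1 u q, pd2 u q))) p) (pd1 (fun q => (q, (pd1 u q, pd2 u q))) p)
          * Gm (pd2 (fun q => (q, (pd1 u q, pd2 u q))) p)
              (pd2 (fun q => (q, (pd1 u q, pd2 u q))) p)
          - (Gm (pd1 (fun q => (q, (pd1 u q, pd2 u q))) p)
              (pd2 (fun q => (q, (pd1 u q, pd2 u q))) p)) ^ 2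
          = -(4 * (pd2 (pd1 u) p) ^ 2 + (pd1 (pd1 u) p - pd2 (pd2 u) p) ^ 2) ∧
      (Gm (pd1 (fun q => (q, (pd1 u q, pd2 u q))) p) (pd1 (fun q => (q, (pd1 u q, pd2 u q))) p)
          * Gm (pd2 (fun q => (q, (pd1 u q, pd2 u q))) p)
              (pd2 (fun q => (q, (pd1 u q, pd2 u q))) p)
          - (Gm (pd1 (fun q => (q, (pd1 u q, pd2 u q))) p)
              (pd2 (fun q => (q, (pd1 u q, pd2 u q))) p)) ^ 2 = 0
        ↔ (pd2 (pd1 u) p = 0 ∧ pd1 (pd1 u) p = pd2 (pd2 u) p)) := by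
  intro p hp
  have h2 : ContDiffAt ℝ 2 u p := hu.contDiffAt (hU.mem_nhds hp)
  have hf' : DifferentiableAt ℝ (fderiv ℝ u) p :=
    (h2.fderiv_right (m := 1) le_rfl).differentiableAt one_ne_zero
  set A := fderiv ℝ (fderiv ℝ u) p with hA
  have key : ∀ v w : ℝ × ℝ, fderiv ℝ (fun q => fderiv ℝ u q v) p w = A w v := by
    intro v w
    have : fderiv ℝ (fun q => (ContinuousLinearMap.apply ℝ ℝ v) (fderiv ℝ u q)) p
        = (ContinuousLinearMap.apply ℝ ℝ v).comp A :=
      ((ContinuousLinearMap.apply ℝ ℝ v).hasFDerivAt.comp p hf'.hasFDerivAt).fderiv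
    simpa using congrArg (fun L => L w) this
  have hsymm : ∀ v w : ℝ × ℝ, A v w = A w v := by
    intro v w
    have hev : ∀ᶠ y in nhds p, HasFDerivAt u (fderiv ℝ u y) y := by
      filter_upwards [hU.mem_nhds hp] with y hy
      exact ((hu.differentiableOn (by norm_num)).differentiableAt (hU.mem_nhds hy)).hasFDerivAt
    exact second_derivative_symmetric_of_eventually hev hf'.hasFDerivAt v w
  -- derivative of X
  have hX : HasFDerivAt (fun q : ℝ × ℝ => (q, (pd1 u q, pd2 u q)))
      ((ContinuousLinearMap.id ℝ (ℝ × ℝ)).prod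
        (((ContinuousLinearMap.apply ℝ ℝ ((1:ℝ), (0:ℝ))).comp A).prod
         ((ContinuousLinearMap.apply ℝ ℝ ((0:ℝ), (1:ℝ))).comp A))) p := by
    refine (hasFDerivAt_id p).prodMk (HasFDerivAt.prodMk ?_ ?_)
    · exact (ContinuousLinearMap.apply ℝ ℝ ((1:ℝ),(0:ℝ))).hasFDerivAt.comp p hf'.hasFDerivAt
    · exact (ContinuousLinearMap.apply ℝ ℝ ((0:ℝ),(1:ℝ))).hasFDerivAt.comp p hf'.hasFDerivAt
  have hX1 : pd1 (fun q => (q, (pd1 u q, pd2 u q))) p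
      = (((1:ℝ),(0:ℝ)), (A (1,0) (1,0), A (1,0) (0,1))) := by
    rw [pd1, hX.fderiv]; rfl
  have hX2 : pd2 (fun q => (q, (pd1 u q, pd2 u q))) p
      = (((0:ℝ),(1:ℝ)), (A (0,1) (1,0), A (0,1) (0,1))) := by
    rw [pd2, hX.fderiv]; rfl
  have h11 : pd1 (pd1 u) p = A (1,0) (1,0) := key (1,0) (1,0)
  have h21 : pd2 (pd1 u) p = A (0,1) (1,0) := key (1,0) (0,1)
  have h12 : pd1 (pd2 u) p = A (1,0) (0,1) := key (0,1) (1,0)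
  have h22 : pd2 (pd2 u) p = A (0,1) (0,1) := key (0,1) (0,1)
  have hs : A (1,0) (0,1) = A (0,1) (1,0) := hsymm _ _
  rw [hX1, hX2, h21, h11, h22]
  set a := A (1,0) (1,0)
  set b := A (0,1) (1,0)
  set d := A (0,1) (0,1)
  clear_value a b d
  simp only [Gm, Om, Jc, rot2, dot2, hs]
  refine ⟨by ring, by ring, by ring, by ring, ?_⟩
  rw [(by ring : (-b * 1 + a * 0 - (-0 * a + 1 * b)) * (-d * 0 + b * 1 - (-1 * b + 0 * d)) -
      (-b * 0 + a * 1 - (-0 * b + 1 * d)) ^ 2 = -(4 * b ^ 2 + (a - d) ^ 2))]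
  exact aux_iff a b d
end
end

section
/- Let U ⊆ ℝ² be open, X : U → ℝ³ a C² map and N : U → ℝ³ a C¹ map with |N| = 1, ⟨N, ∂_s X⟩ = 0 and ⟨N, ∂_t X⟩ = 0 on U (a unit normal field). Set Y := X − ⟨X,N⟩N. Then at every point of U: (i) ⟨∂_s X, ∂_t N⟩ = ⟨∂_t X, ∂_s N⟩; and (ii) ⟨∂_s Y − ⟨∂_s Y, N⟩N, ∂_t N⟩ − ⟨∂_s N, ∂_t Y − ⟨∂_t Y, N⟩N⟩ = 0. (Identity (ii) says that the normal congruence (N, Y) of the surface X, viewed as a surface in TS², is Lagrangian for the canonical symplectic form Ω(ξ,η) = ⟨Kξ, Pη⟩ − ⟨Pξ, Kη⟩, where P is the sphere component of a tangent vector and K is the tangential projection of its fibre component.) -/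
noncomputable section

open Real

/-- Euclidean inner product on ℝ³. -/
def dot3 (v w : Fin 3 → ℝ) : ℝ := v 0 * w 0 + v 1 * w 1 + v 2 * w 2

lemma dot3_comm (v w : Fin 3 → ℝ) : dot3 v w = dot3 w v := by
  simp [dot3]; ring

lemma dot3_sub_left (u v w : Fin 3 → ℝ) : dot3 (u - v) w = dot3 u w - dot3 v w := by
  simp [dot3]; ring

lemma dot3_sub_right (u v w : Fin 3 → ℝ) : dot3 u (v - w) = dot3 u v - dot3 u w := by
  simp [dot3]; ring

lemma dot3_add_left (u v w : Fin 3 → ℝ) : dot3 (u + v) w = dot3 u w + dot3 v w := by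
  simp [dot3]; ring

lemma dot3_add_right (u v w : Fin 3 → ℝ) : dot3 u (v + w) = dot3 u v + dot3 u w := by
  simp [dot3]; ring

lemma dot3_smul_left (r : ℝ) (u v : Fin 3 → ℝ) : dot3 (r • u) v = r * dot3 u v := by
  simp [dot3]; ring

lemma dot3_smul_right (r : ℝ) (u v : Fin 3 → ℝ) : dot3 u (r • v) = r * dot3 u v := by
  simp [dot3]; ring

/-- Leibniz rule for `dot3`. -/
lemma hasFDerivAt_dot3 {f g : ℝ × ℝ → Fin 3 → ℝ} {p : ℝ × ℝ}
    {f' g' : (ℝ × ℝ) →L[ℝ] (Fin 3 → ℝ)}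
    (hf : HasFDerivAt f f' p) (hg : HasFDerivAt g g' p) :
    HasFDerivAt (fun q => dot3 (f q) (g q))
      (((f p 0 • ((ContinuousLinearMap.proj 0).comp g')
          + g p 0 • ((ContinuousLinearMap.proj 0).comp f'))
        + (f p 1 • ((ContinuousLinearMap.proj 1).comp g')
          + g p 1 • ((ContinuousLinearMap.proj 1).comp f')))
        + (f p 2 • ((ContinuousLinearMap.proj 2).comp g')
          + g p 2 • ((ContinuousLinearMap.proj 2).comp f'))) p := by
  have hf0 : HasFDerivAt (fun q => f q 0) ((ContinuousLinearMap.proj 0).comp f') p :=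
    (ContinuousLinearMap.proj (R := ℝ) (φ := fun _ : Fin 3 => ℝ) 0).hasFDerivAt.comp p hf
  have hf1 : HasFDerivAt (fun q => f q 1) ((ContinuousLinearMap.proj 1).comp f') p :=
    (ContinuousLinearMap.proj (R := ℝ) (φ := fun _ : Fin 3 => ℝ) 1).hasFDerivAt.comp p hf
  have hf2 : HasFDerivAt (fun q => f q 2) ((ContinuousLinearMap.proj 2).comp f') p :=
    (ContinuousLinearMap.proj (R := ℝ) (φ := fun _ : Fin 3 => ℝ) 2).hasFDerivAt.comp p hf
  have hg0 : HasFDerivAt (fun q => g q 0) ((ContinuousLinearMap.proj 0).comp g') p :=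
    (ContinuousLinearMap.proj (R := ℝ) (φ := fun _ : Fin 3 => ℝ) 0).hasFDerivAt.comp p hg
  have hg1 : HasFDerivAt (fun q => g q 1) ((ContinuousLinearMap.proj 1).comp g') p :=
    (ContinuousLinearMap.proj (R := ℝ) (φ := fun _ : Fin 3 => ℝ) 1).hasFDerivAt.comp p hg
  have hg2 : HasFDerivAt (fun q => g q 2) ((ContinuousLinearMap.proj 2).comp g') p :=
    (ContinuousLinearMap.proj (R := ℝ) (φ := fun _ : Fin 3 => ℝ) 2).hasFDerivAt.comp p hg
  exact ((hf0.mul hg0).add (hf1.mul hg1)).add (hf2.mul hg2)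

/-- For a C² surface `X : U → ℝ³` with C¹ unit normal field `N`, setting
`Y := X − ⟨X,N⟩N` (so that `(N,Y)` is the normal congruence of `X` in `TS²`), one has
(i) `⟨∂_s X, ∂_t N⟩ = ⟨∂_t X, ∂_s N⟩`, and
(ii) `⟨∂_s Y − ⟨∂_s Y,N⟩N, ∂_t N⟩ − ⟨∂_s N, ∂_t Y − ⟨∂_t Y,N⟩N⟩ = 0`,
i.e. the normal congruence is Lagrangian for the canonical symplectic form of `TS²`. -/
theorem normal_congruence_is_lagrangian (U : Set (ℝ × ℝ)) (hU : IsOpen U)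
    (X N : ℝ × ℝ → Fin 3 → ℝ)
    (hX : ContDiffOn ℝ 2 X U) (hN : ContDiffOn ℝ 1 N U)
    (hunit : ∀ p ∈ U, dot3 (N p) (N p) = 1)
    (hperp1 : ∀ p ∈ U, dot3 (N p) (pd1 X p) = 0)
    (hperp2 : ∀ p ∈ U, dot3 (N p) (pd2 X p) = 0)
    (Y : ℝ × ℝ → Fin 3 → ℝ) (hY : ∀ q, Y q = X q - dot3 (X q) (N q) • N q) :
    (∀ p ∈ U, dot3 (pd1 X p) (pd2 N p) = dot3 (pd2 X p) (pd1 N p)) ∧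
    (∀ p ∈ U,
      dot3 (pd1 Y p - dot3 (pd1 Y p) (N p) • N p) (pd2 N p)
        - dot3 (pd1 N p) (pd2 Y p - dot3 (pd2 Y p) (N p) • N p) = 0) := by
  -- a helper: value of the derivative of a dot product
  have fd_apply : ∀ {f g : ℝ × ℝ → Fin 3 → ℝ} {p : ℝ × ℝ}
      {f' g' : (ℝ × ℝ) →L[ℝ] (Fin 3 → ℝ)},
      HasFDerivAt f f' p → HasFDerivAt g g' p → ∀ v : ℝ × ℝ,
      fderiv ℝ (fun q => dot3 (f q) (g q)) p v = dot3 (f' v) (g p) + dot3 (f p) (g' v) := by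
    intro f g p f' g' hf hg v
    rw [(hasFDerivAt_dot3 hf hg).fderiv]
    simp [dot3]
    ring
  have key : ∀ p ∈ U, dot3 (pd1 X p) (pd2 N p) = dot3 (pd2 X p) (pd1 N p) := by
    intro p hp
    have hpU : U ∈ nhds p := hU.mem_nhds hp
    have hXp : ContDiffAt ℝ 2 X p := hX.contDiffAt hpU
    have hNp : ContDiffAt ℝ 1 N p := hN.contDiffAt hpU
    have hNd : HasFDerivAt N (fderiv ℝ N p) p :=
      (hNp.differentiableAt (by norm_num)).hasFDerivAt
    have hfc : ContDiffAt ℝ 1 (fderiv ℝ X) p := hXp.fderiv_right (by norm_num)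
    have hDd : HasFDerivAt (fderiv ℝ X) (fderiv ℝ (fderiv ℝ X) p) p :=
      (hfc.differentiableAt (by norm_num)).hasFDerivAt
    have hsymm := hXp.isSymmSndFDerivAt (by rw [minSmoothness_of_isRCLikeNormedField])
    have hP1 : HasFDerivAt (fun q => pd1 X q)
        ((ContinuousLinearMap.apply ℝ (Fin 3 → ℝ) ((1:ℝ),(0:ℝ))).comp
          (fderiv ℝ (fderiv ℝ X) p)) p :=
      ((ContinuousLinearMap.apply ℝ (Fin 3 → ℝ) ((1:ℝ),(0:ℝ))).hasFDerivAt).comp p hDd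
    have hP2 : HasFDerivAt (fun q => pd2 X q)
        ((ContinuousLinearMap.apply ℝ (Fin 3 → ℝ) ((0:ℝ),(1:ℝ))).comp
          (fderiv ℝ (fderiv ℝ X) p)) p :=
      ((ContinuousLinearMap.apply ℝ (Fin 3 → ℝ) ((0:ℝ),(1:ℝ))).hasFDerivAt).comp p hDd
    have heq1 : (fun q => dot3 (N q) (pd1 X q)) =ᶠ[nhds p] fun _ => (0:ℝ) := by
      filter_upwards [hpU] with q hq using hperp1 q hq
    have heq2 : (fun q => dot3 (N q) (pd2 X q)) =ᶠ[nhds p] fun _ => (0:ℝ) := by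
      filter_upwards [hpU] with q hq using hperp2 q hq
    have E1 : dot3 (fderiv ℝ N p ((0:ℝ),(1:ℝ))) (pd1 X p)
        + dot3 (N p) (fderiv ℝ (fderiv ℝ X) p ((0:ℝ),(1:ℝ)) ((1:ℝ),(0:ℝ))) = 0 := by
      have h := fd_apply hNd hP1 ((0:ℝ),(1:ℝ))
      rw [heq1.fderiv_eq] at h
      simpa using h.symm
    have E2 : dot3 (fderiv ℝ N p ((1:ℝ),(0:ℝ))) (pd2 X p)
        + dot3 (N p) (fderiv ℝ (fderiv ℝ X) p ((1:ℝ),(0:ℝ)) ((0:ℝ),(1:ℝ))) = 0 := by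
      have h := fd_apply hNd hP2 ((1:ℝ),(0:ℝ))
      rw [heq2.fderiv_eq] at h
      simpa using h.symm
    have hsw : dot3 (N p) (fderiv ℝ (fderiv ℝ X) p ((0:ℝ),(1:ℝ)) ((1:ℝ),(0:ℝ)))
        = dot3 (N p) (fderiv ℝ (fderiv ℝ X) p ((1:ℝ),(0:ℝ)) ((0:ℝ),(1:ℝ))) := by
      rw [hsymm ((0:ℝ),(1:ℝ)) ((1:ℝ),(0:ℝ))]
    have c1 : dot3 (pd1 X p) (pd2 N p) = dot3 (fderiv ℝ N p ((0:ℝ),(1:ℝ))) (pd1 X p) := by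
      rw [dot3_comm]; rfl
    have c2 : dot3 (pd2 X p) (pd1 N p) = dot3 (fderiv ℝ N p ((1:ℝ),(0:ℝ))) (pd2 X p) := by
      rw [dot3_comm]; rfl
    rw [c1, c2]
    linarith [E1, E2, hsw]
  refine ⟨key, ?_⟩
  intro p hp
  have hpU : U ∈ nhds p := hU.mem_nhds hp
  have hXp : ContDiffAt ℝ 2 X p := hX.contDiffAt hpU
  have hNp : ContDiffAt ℝ 1 N p := hN.contDiffAt hpU
  have hXd : HasFDerivAt X (fderiv ℝ X p) p :=
    (hXp.differentiableAt (by norm_num)).hasFDerivAt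
  have hNd : HasFDerivAt N (fderiv ℝ N p) p :=
    (hNp.differentiableAt (by norm_num)).hasFDerivAt
  -- derivative of the unit condition
  have hequ : (fun q => dot3 (N q) (N q)) =ᶠ[nhds p] fun _ => (1:ℝ) := by
    filter_upwards [hpU] with q hq using hunit q hq
  have hnm : dot3 (pd1 N p) (N p) = 0 := by
    have h := fd_apply hNd hNd ((1:ℝ),(0:ℝ))
    rw [hequ.fderiv_eq] at h
    simp only [fderiv_fun_const, Pi.zero_apply, ContinuousLinearMap.zero_apply] at h
    have hc := dot3_comm (N p) (fderiv ℝ N p ((1:ℝ),(0:ℝ)))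
    show dot3 (fderiv ℝ N p ((1:ℝ),(0:ℝ))) (N p) = 0
    linarith
  have hnn : dot3 (pd2 N p) (N p) = 0 := by
    have h := fd_apply hNd hNd ((0:ℝ),(1:ℝ))
    rw [hequ.fderiv_eq] at h
    simp only [fderiv_fun_const, Pi.zero_apply, ContinuousLinearMap.zero_apply] at h
    have hc := dot3_comm (N p) (fderiv ℝ N p ((0:ℝ),(1:ℝ)))
    show dot3 (fderiv ℝ N p ((0:ℝ),(1:ℝ))) (N p) = 0
    linarith
  have hνa : dot3 (pd1 X p) (N p) = 0 := by rw [dot3_comm]; exact hperp1 p hp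
  have hνb : dot3 (pd2 X p) (N p) = 0 := by rw [dot3_comm]; exact hperp2 p hp
  have hνν : dot3 (N p) (N p) = 1 := hunit p hp
  -- derivative of Y
  have hc := hasFDerivAt_dot3 hXd hNd
  have hYd := (hXd.sub (hc.smul hNd)).congr_of_eventuallyEq
    (Filter.Eventually.of_forall hY)
  have h1 : pd1 Y p = pd1 X p - (dot3 (X p) (N p) • pd1 N p
      + (dot3 (pd1 X p) (N p) + dot3 (X p) (pd1 N p)) • N p) := by
    have hf := hYd.fderiv
    simp only [pd1, hf, ContinuousLinearMap.sub_apply, ContinuousLinearMap.add_apply,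
      ContinuousLinearMap.smul_apply, ContinuousLinearMap.smulRight_apply,
      ContinuousLinearMap.comp_apply, ContinuousLinearMap.proj_apply]
    funext i
    simp only [dot3, Pi.sub_apply, Pi.add_apply, Pi.smul_apply, smul_eq_mul]
    ring
  have h2 : pd2 Y p = pd2 X p - (dot3 (X p) (N p) • pd2 N p
      + (dot3 (pd2 X p) (N p) + dot3 (X p) (pd2 N p)) • N p) := by
    have hf := hYd.fderiv
    simp only [pd2, hf, ContinuousLinearMap.sub_apply, ContinuousLinearMap.add_apply,
      ContinuousLinearMap.smul_apply, ContinuousLinearMap.smulRight_apply,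
      ContinuousLinearMap.comp_apply, ContinuousLinearMap.proj_apply]
    funext i
    simp only [dot3, Pi.sub_apply, Pi.add_apply, Pi.smul_apply, smul_eq_mul]
    ring
  have hs1 : dot3 (pd1 Y p) (N p) = -dot3 (X p) (pd1 N p) := by
    rw [h1, dot3_sub_left, dot3_add_left, dot3_smul_left, dot3_smul_left,
      hνa, hnm, hνν]
    ring
  have hs2 : dot3 (pd2 Y p) (N p) = -dot3 (X p) (pd2 N p) := by
    rw [h2, dot3_sub_left, dot3_add_left, dot3_smul_left, dot3_smul_left,
      hνb, hnn, hνν]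
    ring
  have hA : pd1 Y p - dot3 (pd1 Y p) (N p) • N p
      = pd1 X p - dot3 (X p) (N p) • pd1 N p := by
    rw [hs1, h1, hνa]
    module
  have hB : pd2 Y p - dot3 (pd2 Y p) (N p) • N p
      = pd2 X p - dot3 (X p) (N p) • pd2 N p := by
    rw [hs2, h2, hνb]
    module
  rw [hA, hB, dot3_sub_left, dot3_sub_right, dot3_smul_left, dot3_smul_right]
  have hk := key p hp
  have hcm := dot3_comm (pd1 N p) (pd2 X p)
  linarith
end
end

section
/- Let U ⊆ ℝ² be open, X : U → ℝ³ a C² immersion with ⟨∂_s X, ∂_t X⟩ = 0, and N : U → ℝ³ a C¹ unit normal (|N| = 1, ⟨N,∂_s X⟩ = ⟨N,∂_t X⟩ = 0) such that the coordinates are curvature lines: ∂_s N = λ ∂_s X and ∂_t N = μ ∂_t X for functions λ, μ : U → ℝ. Set Y := X − ⟨X,N⟩N. Then the tangential projections of the fibre derivatives of the normal congruence satisfy ∂_s Y − ⟨∂_s Y, N⟩N = (1 − λ⟨X,N⟩) ∂_s X and ∂_t Y − ⟨∂_t Y, N⟩N = (1 − μ⟨X,N⟩) ∂_t X at every point of U.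 -/
noncomputable section

open Real

lemma aux_proj (v n : Fin 3 → ℝ) (a c : ℝ) (h1 : dot3 n v = 0) (h2 : dot3 n n = 1) :
    (v - (c • v + a • n)) - dot3 (v - (c • v + a • n)) n • n = (1 - c) • v := by
  have hs : dot3 (v - (c • v + a • n)) n = -a := by
    simp only [dot3, Pi.sub_apply, Pi.add_apply, Pi.smul_apply, smul_eq_mul] at *
    linear_combination (1 - c) * h1 - a * h2
  rw [hs]
  funext i
  simp only [Pi.sub_apply, Pi.add_apply, Pi.smul_apply, smul_eq_mul]
  ring

/-- For a C² surface `X : U → ℝ³` with orthogonal curvature-line coordinates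
(`∂_s N = λ ∂_s X`, `∂_t N = μ ∂_t X`) and `Y := X − ⟨X,N⟩N`, the tangential projections of
the fibre derivatives of the normal congruence are
`∂_s Y − ⟨∂_s Y,N⟩N = (1 − λ⟨X,N⟩) ∂_s X` and `∂_t Y − ⟨∂_t Y,N⟩N = (1 − μ⟨X,N⟩) ∂_t X`. -/
theorem normal_congruence_fibre_derivatives (U : Set (ℝ × ℝ)) (hU : IsOpen U)
    (X N : ℝ × ℝ → Fin 3 → ℝ) (lam mu : ℝ × ℝ → ℝ)
    (hX : ContDiffOn ℝ 2 X U) (hN : ContDiffOn ℝ 1 N U)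
    (horth : ∀ p ∈ U, dot3 (pd1 X p) (pd2 X p) = 0)
    (hunit : ∀ p ∈ U, dot3 (N p) (N p) = 1)
    (hperp1 : ∀ p ∈ U, dot3 (N p) (pd1 X p) = 0)
    (hperp2 : ∀ p ∈ U, dot3 (N p) (pd2 X p) = 0)
    (hlam : ∀ p ∈ U, pd1 N p = lam p • pd1 X p)
    (hmu : ∀ p ∈ U, pd2 N p = mu p • pd2 X p)
    (Y : ℝ × ℝ → Fin 3 → ℝ) (hY : ∀ q, Y q = X q - dot3 (X q) (N q) • N q) :
    ∀ p ∈ U,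
      pd1 Y p - dot3 (pd1 Y p) (N p) • N p
          = (1 - lam p * dot3 (X p) (N p)) • pd1 X p ∧
      pd2 Y p - dot3 (pd2 Y p) (N p) • N p
          = (1 - mu p * dot3 (X p) (N p)) • pd2 X p := by
  intro p hp
  set g : ℝ × ℝ → ℝ := fun q => dot3 (X q) (N q) with hg
  have hXd : DifferentiableAt ℝ X p :=
    (hX.contDiffAt (hU.mem_nhds hp)).differentiableAt (by norm_num)
  have hNd : DifferentiableAt ℝ N p :=
    (hN.contDiffAt (hU.mem_nhds hp)).differentiableAt (by norm_num)
  have hXc : ∀ i, DifferentiableAt ℝ (fun q => X q i) p := fun i =>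
    (differentiableAt_pi.mp hXd) i
  have hNc : ∀ i, DifferentiableAt ℝ (fun q => N q i) p := fun i =>
    (differentiableAt_pi.mp hNd) i
  have hgd : DifferentiableAt ℝ g p := by
    simp only [hg, dot3]
    exact (((hXc 0).mul (hNc 0)).add ((hXc 1).mul (hNc 1))).add ((hXc 2).mul (hNc 2))
  have hY' : Y = fun q => X q - g q • N q := funext hY
  have key : fderiv ℝ Y p
      = fderiv ℝ X p - (g p • fderiv ℝ N p + (fderiv ℝ g p).smulRight (N p)) := by
    rw [hY', fderiv_fun_sub hXd (show DifferentiableAt ℝ (fun q => g q • N q) p from hgd.smul hNd), fderiv_fun_smul hgd hNd]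
  have kv : ∀ v : ℝ × ℝ, fderiv ℝ Y p v
      = fderiv ℝ X p v - (g p • fderiv ℝ N p v + (fderiv ℝ g p v) • N p) := by
    intro v
    rw [key]
    simp [ContinuousLinearMap.smulRight_apply]
  constructor
  · have hl := hlam p hp
    simp only [pd1] at hl
    have e1 : pd1 Y p = pd1 X p - ((g p * lam p) • pd1 X p + (fderiv ℝ g p (1, 0)) • N p) := by
      simp only [pd1, kv]; rw [hl, smul_smul]
    rw [e1, aux_proj (pd1 X p) (N p) _ _ (hperp1 p hp) (hunit p hp), mul_comm]
  · have hm := hmu p hp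
    simp only [pd2] at hm
    have e2 : pd2 Y p = pd2 X p - ((g p * mu p) • pd2 X p + (fderiv ℝ g p (0, 1)) • N p) := by
      simp only [pd2, kv]; rw [hm, smul_smul]
    rw [e2, aux_proj (pd2 X p) (N p) _ _ (hperp2 p hp) (hunit p hp), mul_comm]
end
end

section
/- Let U ⊆ ℝ² be open, X : U → ℝ³ a C² immersion with ⟨∂_s X, ∂_t X⟩ = 0, and N := (∂_s X × ∂_t X)/|∂_s X × ∂_t X| its unit normal; assume the coordinates are curvature lines: ∂_s N = λ ∂_s X and ∂_t N = μ ∂_t X for functions λ, μ : U → ℝ. Set Y := X − ⟨X,N⟩N and X̄ := (N,Y). Then the coefficients of the metric induced on the normal congruence by the neutral metric 𝔾 of TS² are Ē := 𝔾(∂_s X̄, ∂_s X̄) = 0, Ḡ := 𝔾(∂_t X̄, ∂_t X̄) = 0, and F̄ := 𝔾(∂_s X̄, ∂_t X̄) = (μ − λ)⟨N × ∂_s X, ∂_t X⟩ = (μ − λ) |∂_s X| |∂_t X|; consequently the 𝔾-area element of the congruence is √|ĒḠ − F̄²| = |λ − μ| |∂_s X| |∂_t X|, i.e. |λ − μ|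 times the Euclidean area element of X. (This proves that the 𝔾-area of the normal congruence equals the integral over the surface of the absolute difference of its principal curvatures, which is 2√(H² − K) for mean curvature H = (λ+μ)/2 and Gauss curvature K = λμ.) -/
noncomputable section

open Real

/-- Cross product on ℝ³. -/
def cross3 (v w : Fin 3 → ℝ) : Fin 3 → ℝ :=
  ![v 1 * w 2 - v 2 * w 1, v 2 * w 0 - v 0 * w 2, v 0 * w 1 - v 1 * w 0]

/-- Euclidean norm on ℝ³. -/
def norm3 (v : Fin 3 → ℝ) : ℝ := Real.sqrt (dot3 v v)

/-- Normalization of a vector of ℝ³. -/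
def unit3 (v : Fin 3 → ℝ) : Fin 3 → ℝ := (norm3 v)⁻¹ • v

/-- The neutral metric of `TS²` at the point `(N,·)`, evaluated on tangent vectors written
as pairs `ξ = (Pξ, ξ₂)`: `𝔾(ξ,η) = ⟨N × Kξ, Pη⟩ − ⟨N × Pξ, Kη⟩`, where
`Kξ = ξ₂ − ⟨ξ₂,N⟩N`. -/
def Gcong (N : Fin 3 → ℝ) (ξ η : (Fin 3 → ℝ) × (Fin 3 → ℝ)) : ℝ :=
  dot3 (cross3 N (ξ.2 - dot3 ξ.2 N • N)) η.1 - dot3 (cross3 N ξ.1) (η.2 - dot3 η.2 N • N)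


/-- Auxiliary: projection onto the `i`-th coordinate as a continuous linear map. -/
abbrev pr3 (i : Fin 3) : (Fin 3 → ℝ) →L[ℝ] ℝ :=
  ContinuousLinearMap.proj (R := ℝ) (φ := fun _ : Fin 3 => ℝ) i

lemma my_key (n a b : Fin 3 → ℝ) (l m al be ga de : ℝ) :
    Gcong n (l • a, al • a + be • n) (m • b, ga • b + de • n)
      = (al * m - l * ga) * dot3 (cross3 n a) b := by
  simp [Gcong, dot3, cross3, Matrix.cons_val_zero, Matrix.cons_val_one, Matrix.head_cons]
  ring

lemma my_dot_cross_self (u v : Fin 3 → ℝ) :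
    dot3 (cross3 u v) (cross3 u v) = dot3 u u * dot3 v v - dot3 u v ^ 2 := by
  simp [dot3, cross3]; ring

lemma my_dot_cross_smul (c : ℝ) (u v z : Fin 3 → ℝ) :
    dot3 (cross3 (c • u) v) z = c * dot3 (cross3 u v) z := by
  simp [dot3, cross3]; ring

lemma my_triple_prod (u v z : Fin 3 → ℝ) :
    dot3 (cross3 u v) z = dot3 u (cross3 v z) := by
  simp [dot3, cross3]; ring

lemma my_dot3_self_nonneg (v : Fin 3 → ℝ) : 0 ≤ dot3 v v := by
  have h : dot3 v v = v 0 ^ 2 + v 1 ^ 2 + v 2 ^ 2 := by unfold dot3; ring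
  rw [h]; positivity

lemma my_dot3_self_pos {v : Fin 3 → ℝ} (hv : v ≠ 0) : 0 < dot3 v v := by
  rcases Function.ne_iff.1 hv with ⟨i, hi⟩
  have h : dot3 v v = v 0 ^ 2 + v 1 ^ 2 + v 2 ^ 2 := by unfold dot3; ring
  rw [h]
  fin_cases i <;> simp at hi <;> positivity

lemma my_norm3_pos {v : Fin 3 → ℝ} (hv : v ≠ 0) : 0 < norm3 v :=
  Real.sqrt_pos.2 (my_dot3_self_pos hv)

lemma my_sq_norm3 (v : Fin 3 → ℝ) : norm3 v ^ 2 = dot3 v v :=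
  Real.sq_sqrt (my_dot3_self_nonneg v)

lemma my_contDiffAt_unit3 {v₀ : Fin 3 → ℝ} (h : v₀ ≠ 0) : ContDiffAt ℝ 1 unit3 v₀ := by
  have hproj : ∀ i : Fin 3, ContDiff ℝ 1 (fun v : Fin 3 → ℝ => v i) := fun i => (pr3 i).contDiff
  have hd : ContDiff ℝ 1 (fun v : Fin 3 → ℝ => dot3 v v) := by
    unfold dot3
    exact (((hproj 0).mul (hproj 0)).add ((hproj 1).mul (hproj 1))).add ((hproj 2).mul (hproj 2))
  have hn3 : ContDiffAt ℝ 1 norm3 v₀ :=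
    hd.contDiffAt.sqrt (ne_of_gt (my_dot3_self_pos h))
  have hinv : ContDiffAt ℝ 1 (fun v => (norm3 v)⁻¹) v₀ :=
    hn3.inv (ne_of_gt (my_norm3_pos h))
  exact hinv.smul contDiffAt_id

/-- For a C² immersion `X` with orthogonal curvature-line coordinates, unit normal
`N = (∂_s X × ∂_t X)/|∂_s X × ∂_t X|` and normal congruence `X̄ = (N, Y)`,
`Y = X − ⟨X,N⟩N`, the induced metric coefficients are `Ē = Ḡ = 0` and
`F̄ = (μ−λ)⟨N × ∂_s X, ∂_t X⟩ = (μ−λ)|∂_s X||∂_t X|`; hence the `𝔾`-area element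
`√|ĒḠ − F̄²|` equals `|λ−μ| |∂_s X| |∂_t X|`. -/
theorem normal_congruence_area_element (U : Set (ℝ × ℝ)) (hU : IsOpen U)
    (X N : ℝ × ℝ → Fin 3 → ℝ) (lam mu : ℝ × ℝ → ℝ)
    (hX : ContDiffOn ℝ 2 X U)
    (horth : ∀ p ∈ U, dot3 (pd1 X p) (pd2 X p) = 0)
    (himm : ∀ p ∈ U, cross3 (pd1 X p) (pd2 X p) ≠ 0)
    (hN : ∀ p ∈ U, N p = unit3 (cross3 (pd1 X p) (pd2 X p)))
    (hlam : ∀ p ∈ U, pd1 N p = lam p • pd1 X p)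
    (hmu : ∀ p ∈ U, pd2 N p = mu p • pd2 X p)
    (Y : ℝ × ℝ → Fin 3 → ℝ) (hY : ∀ q, Y q = X q - dot3 (X q) (N q) • N q) :
    ∀ p ∈ U,
      Gcong (N p) (pd1 N p, pd1 Y p) (pd1 N p, pd1 Y p) = 0 ∧
      Gcong (N p) (pd2 N p, pd2 Y p) (pd2 N p, pd2 Y p) = 0 ∧
      Gcong (N p) (pd1 N p, pd1 Y p) (pd2 N p, pd2 Y p)
          = (mu p - lam p) * dot3 (cross3 (N p) (pd1 X p)) (pd2 X p) ∧
      Gcong (N p) (pd1 N p, pd1 Y p) (pd2 N p, pd2 Y p)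
          = (mu p - lam p) * (norm3 (pd1 X p) * norm3 (pd2 X p)) ∧
      Real.sqrt |Gcong (N p) (pd1 N p, pd1 Y p) (pd1 N p, pd1 Y p)
            * Gcong (N p) (pd2 N p, pd2 Y p) (pd2 N p, pd2 Y p)
            - (Gcong (N p) (pd1 N p, pd1 Y p) (pd2 N p, pd2 Y p)) ^ 2|
          = |lam p - mu p| * (norm3 (pd1 X p) * norm3 (pd2 X p)) := by
  intro p hp
  have hpU : U ∈ nhds p := hU.mem_nhds hp
  have hXat : ContDiffAt ℝ 2 X p := hX.contDiffAt hpU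
  have hXA : HasFDerivAt X (fderiv ℝ X p) p :=
    (hXat.differentiableAt (by norm_num)).hasFDerivAt
  -- differentiability of N at p
  have hfd : ContDiffAt ℝ 1 (fderiv ℝ X) p := hXat.fderiv_right (le_refl _)
  have h1 : ContDiffAt ℝ 1 (fun q => fderiv ℝ X q (1, 0)) p := hfd.clm_apply contDiffAt_const
  have h2 : ContDiffAt ℝ 1 (fun q => fderiv ℝ X q (0, 1)) p := hfd.clm_apply contDiffAt_const
  have hc1 : ∀ i : Fin 3, ContDiffAt ℝ 1 (fun q => fderiv ℝ X q (1, 0) i) p := fun i =>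
    ((pr3 i).contDiff.comp_contDiffAt p h1 :)
  have hc2 : ∀ i : Fin 3, ContDiffAt ℝ 1 (fun q => fderiv ℝ X q (0, 1) i) p := fun i =>
    ((pr3 i).contDiff.comp_contDiffAt p h2 :)
  have hcr : ContDiffAt ℝ 1 (fun q => cross3 (pd1 X q) (pd2 X q)) p := by
    apply contDiffAt_pi.2
    intro i
    fin_cases i <;>
      simp only [cross3, pd1, pd2, Matrix.cons_val_zero, Matrix.cons_val_one,
        Matrix.head_cons, Fin.mk_one, Fin.mk_zero, Matrix.cons_val_fin_one] <;>
      first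
      | exact ((hc1 1).mul (hc2 2)).sub ((hc1 2).mul (hc2 1))
      | exact ((hc1 2).mul (hc2 0)).sub ((hc1 0).mul (hc2 2))
      | exact ((hc1 0).mul (hc2 1)).sub ((hc1 1).mul (hc2 0))
  have hNF : ContDiffAt ℝ 1 (fun q => unit3 (cross3 (pd1 X q) (pd2 X q))) p :=
    ContDiffAt.comp (g := unit3) p (my_contDiffAt_unit3 (himm p hp)) hcr
  have hNev : N =ᶠ[nhds p] fun q => unit3 (cross3 (pd1 X q) (pd2 X q)) :=
    Filter.eventuallyEq_of_mem hpU hN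
  have hNat : ContDiffAt ℝ 1 N p := hNF.congr_of_eventuallyEq hNev
  have hNB : HasFDerivAt N (fderiv ℝ N p) p := (hNat.differentiableAt one_ne_zero).hasFDerivAt
  -- derivative of q ↦ ⟨X q, N q⟩
  have hXi : ∀ i : Fin 3, HasFDerivAt (fun q => X q i) ((pr3 i).comp (fderiv ℝ X p)) p :=
    fun i => (pr3 i).hasFDerivAt.comp p hXA
  have hNi : ∀ i : Fin 3, HasFDerivAt (fun q => N q i) ((pr3 i).comp (fderiv ℝ N p)) p :=
    fun i => (pr3 i).hasFDerivAt.comp p hNB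
  have hrho : HasFDerivAt (fun q => dot3 (X q) (N q))
      (((X p 0 • ((pr3 0).comp (fderiv ℝ N p)) + N p 0 • ((pr3 0).comp (fderiv ℝ X p))) +
        (X p 1 • ((pr3 1).comp (fderiv ℝ N p)) + N p 1 • ((pr3 1).comp (fderiv ℝ X p)))) +
       (X p 2 • ((pr3 2).comp (fderiv ℝ N p)) + N p 2 • ((pr3 2).comp (fderiv ℝ X p)))) p := by
    unfold dot3
    exact (((hXi 0).mul (hNi 0)).add ((hXi 1).mul (hNi 1))).add ((hXi 2).mul (hNi 2))
  have hsm := hrho.smul hNB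
  have hYeq : Y = fun q => X q - dot3 (X q) (N q) • N q := funext hY
  have hYd : HasFDerivAt Y
      (fderiv ℝ X p -
        (dot3 (X p) (N p) • fderiv ℝ N p +
          ContinuousLinearMap.smulRight
            (((X p 0 • ((pr3 0).comp (fderiv ℝ N p)) + N p 0 • ((pr3 0).comp (fderiv ℝ X p))) +
              (X p 1 • ((pr3 1).comp (fderiv ℝ N p)) + N p 1 • ((pr3 1).comp (fderiv ℝ X p)))) +
             (X p 2 • ((pr3 2).comp (fderiv ℝ N p)) + N p 2 • ((pr3 2).comp (fderiv ℝ X p))))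
            (N p))) p := by
    rw [hYeq]; exact hXA.sub hsm
  have hlam' : pd1 N p = lam p • pd1 X p := hlam p hp
  have hmu' : pd2 N p = mu p • pd2 X p := hmu p hp
  have e1 : pd1 Y p = (1 - dot3 (X p) (N p) * lam p) • pd1 X p +
      (-(dot3 (pd1 X p) (N p) + lam p * dot3 (X p) (pd1 X p))) • N p := by
    have h := hYd.fderiv
    show fderiv ℝ Y p (1, 0) = _
    rw [h]
    funext i
    have hB1 : fderiv ℝ N p (1, 0) = lam p • pd1 X p := hlam'
    simp only [ContinuousLinearMap.coe_sub', Pi.sub_apply, ContinuousLinearMap.add_apply,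
      ContinuousLinearMap.coe_smul', Pi.smul_apply, ContinuousLinearMap.smulRight_apply,
      ContinuousLinearMap.coe_comp', Function.comp_apply, ContinuousLinearMap.proj_apply,
      hB1, pd1, dot3, Pi.add_apply, smul_eq_mul]
    ring
  have e2 : pd2 Y p = (1 - dot3 (X p) (N p) * mu p) • pd2 X p +
      (-(dot3 (pd2 X p) (N p) + mu p * dot3 (X p) (pd2 X p))) • N p := by
    have h := hYd.fderiv
    show fderiv ℝ Y p (0, 1) = _
    rw [h]
    funext i
    have hB2 : fderiv ℝ N p (0, 1) = mu p • pd2 X p := hmu'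
    simp only [ContinuousLinearMap.coe_sub', Pi.sub_apply, ContinuousLinearMap.add_apply,
      ContinuousLinearMap.coe_smul', Pi.smul_apply, ContinuousLinearMap.smulRight_apply,
      ContinuousLinearMap.coe_comp', Function.comp_apply, ContinuousLinearMap.proj_apply,
      hB2, pd2, dot3, Pi.add_apply, smul_eq_mul]
    ring
  -- geometric facts at p
  have hw : cross3 (pd1 X p) (pd2 X p) ≠ 0 := himm p hp
  have hww : dot3 (cross3 (pd1 X p) (pd2 X p)) (cross3 (pd1 X p) (pd2 X p))
      = dot3 (pd1 X p) (pd1 X p) * dot3 (pd2 X p) (pd2 X p) := by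
    rw [my_dot_cross_self, horth p hp]; ring
  have hnormw : norm3 (cross3 (pd1 X p) (pd2 X p)) = norm3 (pd1 X p) * norm3 (pd2 X p) := by
    unfold norm3
    rw [hww, Real.sqrt_mul (my_dot3_self_nonneg _)]
  have hcr2 : dot3 (cross3 (N p) (pd1 X p)) (pd2 X p)
      = norm3 (pd1 X p) * norm3 (pd2 X p) := by
    rw [hN p hp, unit3, my_dot_cross_smul, my_triple_prod, ← my_sq_norm3, ← hnormw]
    have hpos : norm3 (cross3 (pd1 X p) (pd2 X p)) ≠ 0 := ne_of_gt (my_norm3_pos hw)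
    field_simp
  -- the metric coefficients
  have E0 : Gcong (N p) (pd1 N p, pd1 Y p) (pd1 N p, pd1 Y p) = 0 := by
    rw [hlam', e1, my_key]; ring
  have G0 : Gcong (N p) (pd2 N p, pd2 Y p) (pd2 N p, pd2 Y p) = 0 := by
    rw [hmu', e2, my_key]; ring
  have FF : Gcong (N p) (pd1 N p, pd1 Y p) (pd2 N p, pd2 Y p)
      = (mu p - lam p) * dot3 (cross3 (N p) (pd1 X p)) (pd2 X p) := by
    rw [hlam', hmu', e1, e2, my_key]; ring
  have FB : Gcong (N p) (pd1 N p, pd1 Y p) (pd2 N p, pd2 Y p)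
      = (mu p - lam p) * (norm3 (pd1 X p) * norm3 (pd2 X p)) := by
    rw [FF, hcr2]
  refine ⟨E0, G0, FF, FB, ?_⟩
  rw [E0, G0, FB, zero_mul, zero_sub, abs_neg, abs_of_nonneg (sq_nonneg _),
    Real.sqrt_sq_eq_abs, abs_mul, abs_sub_comm]
  congr 1
  exact abs_of_nonneg (mul_nonneg (Real.sqrt_nonneg _) (Real.sqrt_nonneg _))
end
end

section
/- Let U ⊆ ℝ² be open, X : U → ℝ³ a C² immersion with ⟨∂_s X, ∂_t X⟩ = 0, N := (∂_s X × ∂_t X)/|∂_s X × ∂_t X| its unit normal, and h : U → ℝ a C¹ function. For ε ∈ ℝ set Xᵉ := X + ε h N and Nᵉ := (∂_s Xᵉ × ∂_t Xᵉ)/|∂_s Xᵉ × ∂_t Xᵉ| (defined for ε near 0). Then at every point of U, the derivative of the Gauss map under this normal deformation is d/dε|_{ε=0} Nᵉ = −(∂_s h / |∂_s X|²) ∂_s X − (∂_t h / |∂_t X|²) ∂_t X. -/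
noncomputable section

open Real

namespace GA

lemma dot3_nonneg (v : Fin 3 → ℝ) : 0 ≤ dot3 v v := by
  unfold dot3; nlinarith [sq_nonneg (v 0), sq_nonneg (v 1), sq_nonneg (v 2)]

lemma dot3_pos (v : Fin 3 → ℝ) (hv : v ≠ 0) : 0 < dot3 v v := by
  rcases (dot3_nonneg v).lt_or_eq with h | h
  · exact h
  · exfalso; apply hv; funext i
    have h0 : v 0 = 0 ∧ v 1 = 0 ∧ v 2 = 0 := by
      unfold dot3 at h
      refine ⟨?_, ?_, ?_⟩ <;> nlinarith [sq_nonneg (v 0), sq_nonneg (v 1), sq_nonneg (v 2)]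
    fin_cases i <;> simp [h0.1, h0.2.1, h0.2.2]

lemma dot3_add_right (u v w : Fin 3 → ℝ) : dot3 u (v + w) = dot3 u v + dot3 u w := by
  simp [dot3]; ring

lemma dot3_neg_right (u v : Fin 3 → ℝ) : dot3 u (-v) = -dot3 u v := by
  simp [dot3]; ring

lemma dot3_smul_right (r : ℝ) (u v : Fin 3 → ℝ) : dot3 u (r • v) = r * dot3 u v := by
  simp [dot3]; ring

lemma dot3_smul_left (r : ℝ) (u v : Fin 3 → ℝ) : dot3 (r • u) v = r * dot3 u v := by
  simp [dot3]; ring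

lemma cross3_add_left (u v w : Fin 3 → ℝ) : cross3 (u + v) w = cross3 u w + cross3 v w := by
  funext i; fin_cases i <;> simp [cross3] <;> ring

lemma cross3_smul_left (r : ℝ) (u w : Fin 3 → ℝ) : cross3 (r • u) w = r • cross3 u w := by
  funext i; fin_cases i <;> simp [cross3] <;> ring

lemma cross3_smul_right (r : ℝ) (u w : Fin 3 → ℝ) : cross3 u (r • w) = r • cross3 u w := by
  funext i; fin_cases i <;> simp [cross3] <;> ring

lemma cross3_zero_right (u : Fin 3 → ℝ) : cross3 u 0 = 0 := by
  funext i; fin_cases i <;> simp [cross3]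

lemma cross3_zero_left (u : Fin 3 → ℝ) : cross3 0 u = 0 := by
  funext i; fin_cases i <;> simp [cross3]

lemma triple (u v w : Fin 3 → ℝ) :
    cross3 u (cross3 v w) = dot3 u w • v - dot3 u v • w := by
  funext i; fin_cases i <;> simp [cross3, dot3] <;> ring

lemma dot3_cross_left (a b : Fin 3 → ℝ) : dot3 (cross3 a b) a = 0 := by
  simp [cross3, dot3]; ring

lemma dot3_cross_right (a b : Fin 3 → ℝ) : dot3 (cross3 a b) b = 0 := by
  simp [cross3, dot3]; ring

lemma lagrange (a b : Fin 3 → ℝ) :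
    dot3 (cross3 a b) (cross3 a b) = dot3 a a * dot3 b b - dot3 a b ^ 2 := by
  simp [cross3, dot3]; ring

lemma cross_cross_left (a b : Fin 3 → ℝ) :
    cross3 (cross3 a b) b = dot3 a b • b - dot3 b b • a := by
  funext i; fin_cases i <;> simp [cross3, dot3] <;> ring

lemma cross_cross_self (a b : Fin 3 → ℝ) :
    cross3 a (cross3 a b) = dot3 a b • a - dot3 a a • b := by
  funext i; fin_cases i <;> simp [cross3, dot3] <;> ring

lemma para (c y : Fin 3 → ℝ) (h : cross3 c y = 0) :
    dot3 c c • y = dot3 c y • c := by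
  have h1 := triple c c y
  rw [h, cross3_zero_right] at h1
  have h2 : dot3 c y • c - dot3 c c • y = 0 := h1.symm
  exact (sub_eq_zero.mp h2).symm

lemma dot3_unit3 (v : Fin 3 → ℝ) (hv : v ≠ 0) : dot3 (unit3 v) (unit3 v) = 1 := by
  have hpos := dot3_pos v hv
  have hs : Real.sqrt (dot3 v v) ^ 2 = dot3 v v := Real.sq_sqrt hpos.le
  have hsne : Real.sqrt (dot3 v v) ≠ 0 := (Real.sqrt_pos.mpr hpos).ne'
  simp only [unit3, norm3, dot3, Pi.smul_apply, smul_eq_mul]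
  simp only [dot3] at hs hsne
  have key : ((Real.sqrt (v 0 * v 0 + v 1 * v 1 + v 2 * v 2))⁻¹) ^ 2
      * (Real.sqrt (v 0 * v 0 + v 1 * v 1 + v 2 * v 2)) ^ 2 = 1 := by
    rw [← mul_pow, inv_mul_cancel₀ hsne, one_pow]
  rw [hs] at key
  linear_combination key

/-- The main derivative computation for the normalized cross product along a line. -/
lemma unitCrossDeriv (a b a' b' : Fin 3 → ℝ) (hne : cross3 a b ≠ 0) :
    HasDerivAt (fun ε : ℝ => unit3 (cross3 (a + ε • a') (b + ε • b')))
      ((norm3 (cross3 a b))⁻¹ • (cross3 a' b + cross3 a b')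
        - (dot3 (cross3 a b) (cross3 a' b + cross3 a b') / (norm3 (cross3 a b))^3)
            • cross3 a b) 0 := by
  set c := cross3 a b with hc
  set d := cross3 a' b + cross3 a b' with hdd
  set e := cross3 a' b' with he
  have hexp : ∀ ε : ℝ, cross3 (a + ε • a') (b + ε • b') = c + ε • d + (ε*ε) • e := by
    intro ε; funext i; fin_cases i <;>
      simp [hc, hdd, he, cross3, Pi.add_apply, Pi.smul_apply, smul_eq_mul] <;> ring
  have hfun : (fun ε : ℝ => unit3 (cross3 (a + ε • a') (b + ε • b')))
      = fun ε : ℝ => unit3 (c + ε • d + (ε*ε) • e) := by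
    funext ε; rw [hexp]
  rw [hfun]
  set rc := dot3 c c with hrc
  have hrcpos : 0 < rc := dot3_pos c hne
  set r := Real.sqrt rc with hr
  have hrpos : 0 < r := Real.sqrt_pos.mpr hrcpos
  have hr2 : r ^ 2 = rc := Real.sq_sqrt hrcpos.le
  have hv : ∀ i : Fin 3, HasDerivAt (fun ε : ℝ => (c + ε • d + (ε*ε) • e) i) (d i) 0 := by
    intro i
    have h1 : HasDerivAt (fun ε : ℝ => ε * d i) (d i) 0 := by
      simpa using (hasDerivAt_id (0:ℝ)).mul_const (d i)
    have h2 : HasDerivAt (fun ε : ℝ => ε * ε * e i) 0 0 := by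
      have := ((hasDerivAt_id (0:ℝ)).mul (hasDerivAt_id 0)).mul_const (e i)
      simpa using this
    have : HasDerivAt (fun ε : ℝ => c i + ε * d i + ε * ε * e i) (0 + d i + 0) 0 :=
      ((hasDerivAt_const (0:ℝ) (c i)).add h1).add h2
    simpa [Pi.add_apply, Pi.smul_apply, smul_eq_mul] using this
  have hQ : HasDerivAt (fun ε : ℝ => dot3 (c + ε • d + (ε*ε) • e) (c + ε • d + (ε*ε) • e))
      (2 * dot3 c d) 0 := by
    have := (((hv 0).mul (hv 0)).add ((hv 1).mul (hv 1))).add ((hv 2).mul (hv 2))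
    refine this.congr_deriv ?_
    simp [dot3, Pi.add_apply, Pi.smul_apply, smul_eq_mul]; ring
  have hQ0 : dot3 (c + (0:ℝ) • d + ((0:ℝ)*(0:ℝ)) • e) (c + (0:ℝ) • d + ((0:ℝ)*(0:ℝ)) • e) = rc := by
    simp [hrc]
  rw [hasDerivAt_pi]
  intro i
  have hsq := hQ.sqrt (by rw [hQ0]; exact hrcpos.ne')
  have hinv := hsq.inv (by rw [hQ0, ← hr]; exact hrpos.ne')
  have hprod := hinv.mul (hv i)
  have hshape : (fun ε : ℝ => unit3 (c + ε • d + (ε*ε) • e) i)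
      = fun ε : ℝ => (Real.sqrt (dot3 (c + ε • d + (ε*ε) • e) (c + ε • d + (ε*ε) • e)))⁻¹
          * (c + ε • d + (ε*ε) • e) i := by
    funext ε; simp [unit3, norm3, Pi.smul_apply, smul_eq_mul]
  rw [hshape]
  refine hprod.congr_deriv ?_
  symm
  simp only [Pi.inv_apply]
  rw [hQ0, ← hr]
  simp only [Pi.sub_apply, Pi.smul_apply, Pi.add_apply, smul_eq_mul]
  have hnorm : norm3 c = r := rfl
  rw [hnorm]
  field_simp
  ring

variable {E : Type*} [NormedAddCommGroup E] [NormedSpace ℝ E]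

lemma diffAt_dot3 {f g : E → Fin 3 → ℝ} {x : E}
    (hf : DifferentiableAt ℝ f x) (hg : DifferentiableAt ℝ g x) :
    DifferentiableAt ℝ (fun y => dot3 (f y) (g y)) x := by
  have hfi : ∀ i, DifferentiableAt ℝ (fun y => f y i) x := fun i => differentiableAt_pi.mp hf i
  have hgi : ∀ i, DifferentiableAt ℝ (fun y => g y i) x := fun i => differentiableAt_pi.mp hg i
  exact (((hfi 0).mul (hgi 0)).add ((hfi 1).mul (hgi 1))).add ((hfi 2).mul (hgi 2))

lemma diffAt_cross3 {f g : E → Fin 3 → ℝ} {x : E}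
    (hf : DifferentiableAt ℝ f x) (hg : DifferentiableAt ℝ g x) :
    DifferentiableAt ℝ (fun y => cross3 (f y) (g y)) x := by
  have hfi : ∀ i, DifferentiableAt ℝ (fun y => f y i) x := fun i => differentiableAt_pi.mp hf i
  have hgi : ∀ i, DifferentiableAt ℝ (fun y => g y i) x := fun i => differentiableAt_pi.mp hg i
  rw [differentiableAt_pi]
  intro i
  fin_cases i <;> simp only [cross3, Matrix.cons_val_zero, Matrix.cons_val_one, Matrix.head_cons,
    Matrix.cons_val_two, Matrix.tail_cons]
  · exact ((hfi 1).mul (hgi 2)).sub ((hfi 2).mul (hgi 1))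
  · exact ((hfi 2).mul (hgi 0)).sub ((hfi 0).mul (hgi 2))
  · exact ((hfi 0).mul (hgi 1)).sub ((hfi 1).mul (hgi 0))

lemma diffAt_unit3 {f : E → Fin 3 → ℝ} {x : E}
    (hf : DifferentiableAt ℝ f x) (h0 : f x ≠ 0) :
    DifferentiableAt ℝ (fun y => unit3 (f y)) x := by
  have hd : DifferentiableAt ℝ (fun y => dot3 (f y) (f y)) x := diffAt_dot3 hf hf
  have hpos : 0 < dot3 (f x) (f x) := dot3_pos _ h0
  have hs : DifferentiableAt ℝ (fun y => Real.sqrt (dot3 (f y) (f y))) x := hd.sqrt hpos.ne'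
  have hsne : Real.sqrt (dot3 (f x) (f x)) ≠ 0 := (Real.sqrt_pos.mpr hpos).ne'
  exact (hs.inv hsne).smul hf

lemma dot3_fderiv_eq_zero {f : ℝ × ℝ → Fin 3 → ℝ} {p : ℝ × ℝ}
    (hf : DifferentiableAt ℝ f p)
    (hone : (fun q => dot3 (f q) (f q)) =ᶠ[nhds p] (fun _ => 1)) (v : ℝ × ℝ) :
    dot3 (f p) (fderiv ℝ f p v) = 0 := by
  have Hi : ∀ i : Fin 3, HasFDerivAt (fun q => f q i)
      ((ContinuousLinearMap.proj i).comp (fderiv ℝ f p)) p := by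
    intro i
    exact ((ContinuousLinearMap.proj (R := ℝ) (φ := fun _ : Fin 3 => ℝ) i).hasFDerivAt).comp p
      hf.hasFDerivAt
  have HG := (((Hi 0).mul (Hi 0)).add ((Hi 1).mul (Hi 1))).add ((Hi 2).mul (Hi 2))
  have HG' : HasFDerivAt (fun q => dot3 (f q) (f q))
      ((f p 0 • (ContinuousLinearMap.proj 0).comp (fderiv ℝ f p)
          + f p 0 • (ContinuousLinearMap.proj 0).comp (fderiv ℝ f p)
        + (f p 1 • (ContinuousLinearMap.proj 1).comp (fderiv ℝ f p)
          + f p 1 • (ContinuousLinearMap.proj 1).comp (fderiv ℝ f p)))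
        + (f p 2 • (ContinuousLinearMap.proj 2).comp (fderiv ℝ f p)
          + f p 2 • (ContinuousLinearMap.proj 2).comp (fderiv ℝ f p))) p := HG
  have H0 : HasFDerivAt (fun q => dot3 (f q) (f q)) 0 p :=
    (hasFDerivAt_const (𝕜 := ℝ) (1:ℝ) p).congr_of_eventuallyEq hone
  have huniq := HG'.unique H0
  have hv := congrArg (fun L : (ℝ × ℝ) →L[ℝ] ℝ => L v) huniq
  simp only [ContinuousLinearMap.add_apply, ContinuousLinearMap.coe_smul', Pi.smul_apply,
    ContinuousLinearMap.coe_comp', Function.comp_apply, ContinuousLinearMap.proj_apply,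
    smul_eq_mul, ContinuousLinearMap.zero_apply] at hv
  unfold dot3
  linarith

end GA

/-- For a C² immersion `X : U → ℝ³` with orthogonal coordinates and unit normal
`N = (∂_s X × ∂_t X)/|∂_s X × ∂_t X|`, and a C¹ function `h`, the Gauss map
`Nᵉ` of the normal deformation `Xᵉ = X + ε h N` satisfies
`d/dε|₀ Nᵉ = −(∂_s h/|∂_s X|²) ∂_s X − (∂_t h/|∂_t X|²) ∂_t X`. -/
theorem gauss_map_variation (U : Set (ℝ × ℝ)) (hU : IsOpen U)
    (X N : ℝ × ℝ → Fin 3 → ℝ) (h : ℝ × ℝ → ℝ)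
    (hX : ContDiffOn ℝ 2 X U) (hh : ContDiffOn ℝ 1 h U)
    (horth : ∀ p ∈ U, dot3 (pd1 X p) (pd2 X p) = 0)
    (himm : ∀ p ∈ U, cross3 (pd1 X p) (pd2 X p) ≠ 0)
    (hN : ∀ p ∈ U, N p = unit3 (cross3 (pd1 X p) (pd2 X p))) :
    ∀ p ∈ U,
      deriv (fun ε : ℝ =>
          unit3 (cross3 (pd1 (fun q => X q + (ε * h q) • N q) p)
                        (pd2 (fun q => X q + (ε * h q) • N q) p))) 0
        = -(pd1 h p / dot3 (pd1 X p) (pd1 X p)) • pd1 X p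
          - (pd2 h p / dot3 (pd2 X p) (pd2 X p)) • pd2 X p := by
  intro p hp
  have hUp : U ∈ nhds p := hU.mem_nhds hp
  -- basic differentiability
  have hXd : DifferentiableAt ℝ X p :=
    (hX.differentiableOn (by norm_num)).differentiableAt hUp
  have hhd : DifferentiableAt ℝ h p :=
    (hh.differentiableOn (by norm_num)).differentiableAt hUp
  have hX1 : ContDiffOn ℝ 1 (fderiv ℝ X) U := hX.fderiv_of_isOpen hU (by norm_num)
  have hfXd : DifferentiableAt ℝ (fderiv ℝ X) p :=
    (hX1.differentiableOn (by norm_num)).differentiableAt hUp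
  have hp1Xd : DifferentiableAt ℝ (fun q => pd1 X q) p :=
    hfXd.clm_apply (differentiableAt_const ((1:ℝ), (0:ℝ)))
  have hp2Xd : DifferentiableAt ℝ (fun q => pd2 X q) p :=
    hfXd.clm_apply (differentiableAt_const ((0:ℝ), (1:ℝ)))
  -- N is differentiable at p
  have hNev : N =ᶠ[nhds p] (fun q => unit3 (cross3 (pd1 X q) (pd2 X q))) := by
    filter_upwards [hUp] with q hq using hN q hq
  have hGd : DifferentiableAt ℝ (fun q => unit3 (cross3 (pd1 X q) (pd2 X q))) p :=
    GA.diffAt_unit3 (GA.diffAt_cross3 hp1Xd hp2Xd) (himm p hp)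
  have hNd : DifferentiableAt ℝ N p := hGd.congr_of_eventuallyEq hNev
  -- the unit normal has constant norm 1 near p
  have hone : (fun q => dot3 (N q) (N q)) =ᶠ[nhds p] (fun _ => (1:ℝ)) := by
    filter_upwards [hUp] with q hq
    rw [hN q hq]
    exact GA.dot3_unit3 _ (himm q hq)
  set w1 : Fin 3 → ℝ := fderiv ℝ N p (1, 0) with hw1def
  set w2 : Fin 3 → ℝ := fderiv ℝ N p (0, 1) with hw2def
  have hNw1 : dot3 (N p) w1 = 0 := GA.dot3_fderiv_eq_zero hNd hone (1, 0)
  have hNw2 : dot3 (N p) w2 = 0 := GA.dot3_fderiv_eq_zero hNd hone (0, 1)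
  -- derivative of h • N
  have hD : HasFDerivAt (fun q => h q • N q)
      (h p • fderiv ℝ N p + (fderiv ℝ h p).smulRight (N p)) p :=
    hhd.hasFDerivAt.smul hNd.hasFDerivAt
  have hDd : DifferentiableAt ℝ (fun q => h q • N q) p := hD.differentiableAt
  have ha' : pd1 (fun q => h q • N q) p = h p • w1 + pd1 h p • N p := by
    show fderiv ℝ (fun q => h q • N q) p (1, 0) = _
    rw [hD.fderiv]
    simp [pd1, hw1def]
  have hb' : pd2 (fun q => h q • N q) p = h p • w2 + pd2 h p • N p := by
    show fderiv ℝ (fun q => h q • N q) p (0, 1) = _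
    rw [hD.fderiv]
    simp [pd2, hw2def]
  -- rewrite the deformed partial derivatives
  have hkey : ∀ (ε : ℝ) (v : ℝ × ℝ), fderiv ℝ (fun q => X q + (ε * h q) • N q) p v
      = fderiv ℝ X p v + ε • fderiv ℝ (fun q => h q • N q) p v := by
    intro ε v
    have h1 : (fun q => X q + (ε * h q) • N q) = fun q => X q + ε • (h q • N q) := by
      funext q; rw [mul_smul]
    rw [h1, HasFDerivAt.fderiv (f := fun q => X q + ε • (h q • N q))
      (hXd.hasFDerivAt.add (hDd.hasFDerivAt.const_smul ε))]
    simp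
  have hfun : (fun ε : ℝ => unit3 (cross3 (pd1 (fun q => X q + (ε * h q) • N q) p)
        (pd2 (fun q => X q + (ε * h q) • N q) p)))
      = fun ε : ℝ => unit3 (cross3 (pd1 X p + ε • (h p • w1 + pd1 h p • N p))
          (pd2 X p + ε • (h p • w2 + pd2 h p • N p))) := by
    funext ε
    have e1 : pd1 (fun q => X q + (ε * h q) • N q) p
        = pd1 X p + ε • pd1 (fun q => h q • N q) p := hkey ε (1, 0)
    have e2 : pd2 (fun q => X q + (ε * h q) • N q) p
        = pd2 X p + ε • pd2 (fun q => h q • N q) p := hkey ε (0, 1)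
    rw [e1, e2, ha', hb']
  rw [hfun, (GA.unitCrossDeriv (pd1 X p) (pd2 X p) (h p • w1 + pd1 h p • N p)
      (h p • w2 + pd2 h p • N p) (himm p hp)).deriv]
  -- now pure algebra
  set a : Fin 3 → ℝ := pd1 X p with hadef
  set b : Fin 3 → ℝ := pd2 X p with hbdef
  set c : Fin 3 → ℝ := cross3 a b with hcdef
  set r : ℝ := norm3 c with hrdef
  have hab : dot3 a b = 0 := horth p hp
  have hcne : c ≠ 0 := himm p hp
  have hca : dot3 c a = 0 := GA.dot3_cross_left a b
  have hcb : dot3 c b = 0 := GA.dot3_cross_right a b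
  have hrcpos : 0 < dot3 c c := GA.dot3_pos c hcne
  have hrpos : 0 < r := Real.sqrt_pos.mpr hrcpos
  have hr2 : r ^ 2 = dot3 c c := Real.sq_sqrt hrcpos.le
  have ha0 : a ≠ 0 := by
    intro h0
    exact hcne (by rw [hcdef, h0, GA.cross3_zero_left])
  have hb0 : b ≠ 0 := by
    intro h0
    exact hcne (by rw [hcdef, h0, GA.cross3_zero_right])
  have hda : dot3 a a ≠ 0 := (GA.dot3_pos a ha0).ne'
  have hdb : dot3 b b ≠ 0 := (GA.dot3_pos b hb0).ne'
  have hlag : dot3 c c = dot3 a a * dot3 b b := by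
    have := GA.lagrange a b
    rw [hab] at this
    simpa using this
  have hNp : N p = r⁻¹ • c := by
    rw [hN p hp, hrdef]; rfl
  have hcw1 : dot3 c w1 = 0 := by
    have := hNw1
    rw [hNp, GA.dot3_smul_left] at this
    rcases mul_eq_zero.mp this with h0 | h0
    · exact absurd h0 (inv_ne_zero hrpos.ne')
    · exact h0
  have hcw2 : dot3 c w2 = 0 := by
    have := hNw2
    rw [hNp, GA.dot3_smul_left] at this
    rcases mul_eq_zero.mp this with h0 | h0
    · exact absurd h0 (inv_ne_zero hrpos.ne')
    · exact h0
  -- express the cross products in the basis a, b, c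
  have hA : cross3 w1 b = ((dot3 c c)⁻¹ * dot3 c (cross3 w1 b)) • c := by
    have h0 : cross3 c (cross3 w1 b) = 0 := by
      rw [GA.triple, hcb, hcw1]; simp
    have hp' := GA.para c _ h0
    calc cross3 w1 b = (dot3 c c)⁻¹ • (dot3 c c • cross3 w1 b) := by
          rw [smul_smul, inv_mul_cancel₀ hrcpos.ne', one_smul]
      _ = (dot3 c c)⁻¹ • (dot3 c (cross3 w1 b) • c) := by rw [hp']
      _ = ((dot3 c c)⁻¹ * dot3 c (cross3 w1 b)) • c := by rw [smul_smul]
  have hC : cross3 a w2 = ((dot3 c c)⁻¹ * dot3 c (cross3 a w2)) • c := by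
    have h0 : cross3 c (cross3 a w2) = 0 := by
      rw [GA.triple, hca, hcw2]; simp
    have hp' := GA.para c _ h0
    calc cross3 a w2 = (dot3 c c)⁻¹ • (dot3 c c • cross3 a w2) := by
          rw [smul_smul, inv_mul_cancel₀ hrcpos.ne', one_smul]
      _ = (dot3 c c)⁻¹ • (dot3 c (cross3 a w2) • c) := by rw [hp']
      _ = ((dot3 c c)⁻¹ * dot3 c (cross3 a w2)) • c := by rw [smul_smul]
  have hB : cross3 (N p) b = -((r⁻¹ * dot3 b b) • a) := by
    rw [hNp, GA.cross3_smul_left, hcdef, GA.cross_cross_left, hab, zero_smul, zero_sub,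
      smul_neg, smul_smul]
  have hD2 : cross3 a (N p) = -((r⁻¹ * dot3 a a) • b) := by
    rw [hNp, GA.cross3_smul_right, hcdef, GA.cross_cross_self, hab, zero_smul, zero_sub,
      smul_neg, smul_smul]
  set s1 : ℝ := dot3 c (cross3 w1 b) with hs1
  set s2 : ℝ := dot3 c (cross3 a w2) with hs2
  have hd1 : cross3 (h p • w1 + pd1 h p • N p) b
      = (h p * ((dot3 c c)⁻¹ * s1)) • c + -((pd1 h p * (r⁻¹ * dot3 b b)) • a) := by
    rw [GA.cross3_add_left, GA.cross3_smul_left, GA.cross3_smul_left, hA, hB, smul_smul,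
      smul_neg, smul_smul]
  have hd2 : cross3 a (h p • w2 + pd2 h p • N p)
      = (h p * ((dot3 c c)⁻¹ * s2)) • c + -((pd2 h p * (r⁻¹ * dot3 a a)) • b) := by
    have : cross3 a (h p • w2 + pd2 h p • N p)
        = h p • cross3 a w2 + pd2 h p • cross3 a (N p) := by
      funext i; fin_cases i <;> simp [cross3, Pi.add_apply, Pi.smul_apply, smul_eq_mul] <;> ring
    rw [this, hC, hD2, smul_smul, smul_neg, smul_smul]
  rw [hd1, hd2]
  have hdot : dot3 c ((h p * ((dot3 c c)⁻¹ * s1)) • c + -((pd1 h p * (r⁻¹ * dot3 b b)) • a)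
      + ((h p * ((dot3 c c)⁻¹ * s2)) • c + -((pd2 h p * (r⁻¹ * dot3 a a)) • b)))
      = h p * ((dot3 c c)⁻¹ * s1) * dot3 c c + h p * ((dot3 c c)⁻¹ * s2) * dot3 c c := by
    simp only [GA.dot3_add_right, GA.dot3_neg_right, GA.dot3_smul_right, hca, hcb]
    ring
  rw [hdot]
  match_scalars
  · field_simp
    linear_combination (h p * s1 + h p * s2) * hr2
  · field_simp
    linear_combination pd1 h p * hlag + pd1 h p * hr2
  · field_simp
    linear_combination pd2 h p * hlag + pd2 h p * hr2
end
end
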